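/- arXiv:1712.03317 — 4 statements merged into one kernel-verified Lean document; each statement's English description precedes it below -/
import Mathlib

section
/- Consider the triangular array of independent binomial observations under the null hypothesis H₀: π₁ = ⋯ = π_k = π with π ≤ δ for a fixed δ < 1 and n_i ≥ 2, and write θ̃ = π̄(1−π̄) (= π(1−π) under H₀). If (θ̃³ Σ_{i=1}^k 1/n_i + θ̃ Σ_{i=1}^k 1/n_i³) / (k θ̃² + (θ̃/N²) Σ_{i=1}^k 1/n_i)² → 0 as k → ∞, then 𝒱̂_{1*} / 𝒱_{1*} → 1 in probability as k → ∞. -/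
noncomputable section

/-- `X` has the `Binomial(n, p)` distribution under the measure `μ`. -/
def IsBinomial {Ω : Type*} [MeasurableSpace Ω] (μ : MeasureTheory.Measure Ω) (X : Ω → ℕ)
    (n : ℕ) (p : ℝ) : Prop :=
  ∀ m : ℕ, (μ {ω | X ω = m}).toReal = (n.choose m : ℝ) * p ^ m * (1 - p) ^ (n - m)

/-- A collection of `k` independent binomial observations `Xᵢ ~ Binomial(nᵢ, πᵢ)`,
indexed by `i ∈ Finset.range k`, with `nᵢ ≥ 2` and `πᵢ ∈ (0,1)`. -/
structure BinSetup where
  Ω : Type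
  [inst : MeasurableSpace Ω]
  μ : MeasureTheory.Measure Ω
  prob : MeasureTheory.IsProbabilityMeasure μ
  k : ℕ
  n : ℕ → ℕ
  pi : ℕ → ℝ
  X : ℕ → Ω → ℕ
  hn : ∀ i ∈ Finset.range k, 2 ≤ n i
  hpi : ∀ i ∈ Finset.range k, pi i ∈ Set.Ioo (0 : ℝ) 1
  hmeas : ∀ i, Measurable (X i)
  hindep : ProbabilityTheory.iIndepFun X μ
  hbin : ∀ i ∈ Finset.range k, IsBinomial μ (X i) (n i) (pi i)

attribute [instance] BinSetup.inst

open MeasureTheory ProbabilityTheory Filter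

/-- Standard normal cumulative distribution function. -/
def stdNormalCDF (z : ℝ) : ℝ :=
  ∫ x in Set.Iic z, Real.exp (-x ^ 2 / 2) / Real.sqrt (2 * Real.pi)

namespace BinSetup

variable (S : BinSetup)

/-- `N = Σ nᵢ` (as a real number). -/
def Nreal : ℝ := ∑ i ∈ Finset.range S.k, (S.n i : ℝ)

/-- `π̄ = (1/N) Σ nᵢ πᵢ`. -/
def pbar : ℝ := (∑ i ∈ Finset.range S.k, (S.n i : ℝ) * S.pi i) / S.Nreal

/-- `θᵢ = πᵢ(1 − πᵢ)`. -/
def theta (i : ℕ) : ℝ := S.pi i * (1 - S.pi i)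

/-- `π̂ᵢ = Xᵢ/nᵢ`. -/
def piHat (i : ℕ) (ω : S.Ω) : ℝ := (S.X i ω : ℝ) / (S.n i : ℝ)

/-- `π̂̄ = (1/N) Σ nᵢ π̂ᵢ` (the pooled estimator). -/
def pbarHat (ω : S.Ω) : ℝ :=
  (∑ i ∈ Finset.range S.k, (S.n i : ℝ) * S.piHat i ω) / S.Nreal

/-- `dᵢ = (nᵢ/(nᵢ−1))(1 − nᵢ/N)`. -/
def d (i : ℕ) : ℝ := ((S.n i : ℝ) / ((S.n i : ℝ) - 1)) * (1 - (S.n i : ℝ) / S.Nreal)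

/-- `𝒜_{1i}`. -/
def A1 (i : ℕ) : ℝ :=
  2 - 6 / (S.n i : ℝ) - S.d i ^ 2 / (S.n i : ℝ) + 8 * S.d i ^ 2 / (S.n i : ℝ) ^ 2
    - 6 * S.d i ^ 2 / (S.n i : ℝ) ^ 3 + 12 * S.d i * ((S.n i : ℝ) - 1) / (S.n i : ℝ) ^ 2

/-- `𝒜_{2i} = nᵢ/N²`. -/
def A2 (i : ℕ) : ℝ := (S.n i : ℝ) / S.Nreal ^ 2

/-- Coefficients `a_{li}`, `l = 1,2,3,4`. -/
def a (l i : ℕ) : ℝ :=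
  if l = 1 then S.A2 i
  else if l = 2 then S.A1 i - S.A2 i
  else if l = 3 then -2 * S.A1 i
  else S.A1 i

/-- The bias-corrected statistic `T = Σ nᵢ(π̂ᵢ − π̂̄)² − Σ dᵢ π̂ᵢ(1−π̂ᵢ)`. -/
def T (ω : S.Ω) : ℝ :=
  ∑ i ∈ Finset.range S.k, (S.n i : ℝ) * (S.piHat i ω - S.pbarHat ω) ^ 2
    - ∑ i ∈ Finset.range S.k, S.d i * S.piHat i ω * (1 - S.piHat i ω)

/-- `T₁ = Σ [nᵢ(π̂ᵢ−πᵢ)² − dᵢπ̂ᵢ(1−π̂ᵢ) + 2nᵢ(π̂ᵢ−πᵢ)(πᵢ−π̄) + nᵢ(πᵢ−π̄)²]`. -/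
def T1 (ω : S.Ω) : ℝ :=
  ∑ i ∈ Finset.range S.k,
    ((S.n i : ℝ) * (S.piHat i ω - S.pi i) ^ 2 - S.d i * S.piHat i ω * (1 - S.piHat i ω)
      + 2 * (S.n i : ℝ) * (S.piHat i ω - S.pi i) * (S.pi i - S.pbar)
      + (S.n i : ℝ) * (S.pi i - S.pbar) ^ 2)

/-- `𝒱₁ = Σ (𝒜_{1i}θᵢ² + 𝒜_{2i}θᵢ)`. -/
def V1 : ℝ := ∑ i ∈ Finset.range S.k, (S.A1 i * S.theta i ^ 2 + S.A2 i * S.theta i)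

/-- `𝒱_{1*} = (π̄(1−π̄))² Σ 𝒜_{1i} + π̄(1−π̄) Σ 𝒜_{2i}`. -/
def V1star : ℝ :=
  (S.pbar * (1 - S.pbar)) ^ 2 * ∑ i ∈ Finset.range S.k, S.A1 i
    + S.pbar * (1 - S.pbar) * ∑ i ∈ Finset.range S.k, S.A2 i

/-- `η̂_{li}`, the unbiased estimator of `πᵢ^l`. -/
def etaHat (l i : ℕ) (ω : S.Ω) : ℝ :=
  ((S.n i : ℝ) ^ l / ∏ j ∈ Finset.range l, ((S.n i : ℝ) - (j : ℝ))) *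
    ∏ j ∈ Finset.range l, (S.piHat i ω - (j : ℝ) / (S.n i : ℝ))

/-- `η̂_l`, the pooled unbiased estimator of `π^l` under `H₀`. -/
def etaHatPooled (l : ℕ) (ω : S.Ω) : ℝ :=
  (S.Nreal ^ l / ∏ j ∈ Finset.range l, (S.Nreal - (j : ℝ))) *
    ∏ j ∈ Finset.range l, (S.pbarHat ω - (j : ℝ) / S.Nreal)

/-- `𝒱̂₁ = Σᵢ Σ_{l=1}^4 a_{li} η̂_{li}`. -/
def V1hat (ω : S.Ω) : ℝ :=
  ∑ i ∈ Finset.range S.k, ∑ l ∈ Finset.Icc 1 4, S.a l i * S.etaHat l i ω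

/-- `𝒱̂_{1*} = Σᵢ Σ_{l=1}^4 a_{li} η̂_l`. -/
def V1starHat (ω : S.Ω) : ℝ :=
  ∑ i ∈ Finset.range S.k, ∑ l ∈ Finset.Icc 1 4, S.a l i * S.etaHatPooled l ω

/-- `‖π − π̄‖²_{nθ} = Σ nᵢ(πᵢ−π̄)²θᵢ`. -/
def normSqNTheta : ℝ :=
  ∑ i ∈ Finset.range S.k, (S.n i : ℝ) * (S.pi i - S.pbar) ^ 2 * S.theta i

/-- The formula for the variance of `T₁`:
`Var(T₁) = 𝒱₁ + 4Σ nᵢ(πᵢ−π̄)²θᵢ + (4/N)Σ nᵢ(πᵢ−π̄)(1−2πᵢ)θᵢ`. -/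
def varT1 : ℝ :=
  S.V1 + 4 * ∑ i ∈ Finset.range S.k, (S.n i : ℝ) * (S.pi i - S.pbar) ^ 2 * S.theta i
    + (4 / S.Nreal) * ∑ i ∈ Finset.range S.k,
        (S.n i : ℝ) * (S.pi i - S.pbar) * (1 - 2 * S.pi i) * S.theta i

/-- The oracle Cochran statistic `𝒯_S = Σ (Xᵢ − nᵢπ̄)²/(nᵢπ̄(1−π̄))`. -/
def TS (ω : S.Ω) : ℝ :=
  ∑ i ∈ Finset.range S.k,
    ((S.X i ω : ℝ) - (S.n i : ℝ) * S.pbar) ^ 2 / ((S.n i : ℝ) * S.pbar * (1 - S.pbar))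

/-- `E[𝒯_S]`. -/
def ETS : ℝ := ∫ ω, S.TS ω ∂S.μ

/-- `𝓑_k = Var(𝒯_S)`. -/
def Bk : ℝ := variance S.TS S.μ

/-- `𝓑_{0k} = Σ (2 − 6/nᵢ + 1/(nᵢπ̄(1−π̄)))`. -/
def B0k : ℝ :=
  ∑ i ∈ Finset.range S.k, (2 - 6 / (S.n i : ℝ) + 1 / ((S.n i : ℝ) * S.pbar * (1 - S.pbar)))

/-- `T₀ = (𝒯_S − k)/√𝓑_{0k}`. -/
def T0 (ω : S.Ω) : ℝ := (S.TS ω - (S.k : ℝ)) / Real.sqrt S.B0k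

/-- `μ_k = (E[𝒯_S] − k)/√𝓑_k`. -/
def muk : ℝ := (S.ETS - (S.k : ℝ)) / Real.sqrt S.Bk

/-- `σ_k = √(𝓑_k/𝓑_{0k})`. -/
def sigmak : ℝ := Real.sqrt (S.Bk / S.B0k)

/-- The data-driven Cochran statistic `T_S = Σ (Xᵢ − nᵢπ̂̄)²/(nᵢπ̂̄(1−π̂̄))`. -/
def TShat (ω : S.Ω) : ℝ :=
  ∑ i ∈ Finset.range S.k,
    ((S.X i ω : ℝ) - (S.n i : ℝ) * S.pbarHat ω) ^ 2
      / ((S.n i : ℝ) * S.pbarHat ω * (1 - S.pbarHat ω))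

/-- `𝓑̂_{0k} = Σ (2 − 6/nᵢ + 1/(nᵢπ̂̄(1−π̂̄)))`. -/
def B0khat (ω : S.Ω) : ℝ :=
  ∑ i ∈ Finset.range S.k,
    (2 - 6 / (S.n i : ℝ) + 1 / ((S.n i : ℝ) * S.pbarHat ω * (1 - S.pbarHat ω)))

/-- `T_χ = (T_S − k)/√𝓑̂_{0k}`. -/
def Tchi (ω : S.Ω) : ℝ := (S.TShat ω - (S.k : ℝ)) / Real.sqrt (S.B0khat ω)

end BinSetup


set_option maxHeartbeats 1600000

section Stmt7Aux
open Finset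



lemma key_shift (n : ℕ) (hn : 1 ≤ n) (p q : ℝ) (g : ℕ → ℝ) :
    ∑ m ∈ range (n+1), (m:ℝ) * ((n.choose m : ℝ) * p^m * q^(n-m)) * g m
      = n * p * ∑ j ∈ range n, ((n-1).choose j : ℝ) * p^j * q^((n-1)-j) * g (j+1) := by
  rw [Finset.sum_range_succ']
  simp only [Nat.cast_zero, zero_mul, mul_zero, zero_mul, add_zero]
  rw [Finset.mul_sum]
  refine Finset.sum_congr rfl fun j hj => ?_
  have hj' : j < n := Finset.mem_range.mp hj
  have hid : ((j+1) : ℝ) * ((n.choose (j+1) : ℝ)) = (n : ℝ) * ((n-1).choose j : ℝ) := by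
    have h0 := Nat.add_one_mul_choose_eq (n-1) j
    have hs : n - 1 + 1 = n := by omega
    rw [hs] at h0
    have hnat : (j+1) * n.choose (j+1) = n * ((n-1).choose j) := by
      simpa [Nat.succ_eq_add_one, mul_comm] using h0.symm
    exact_mod_cast hnat
  have hexp : n - (j+1) = (n-1) - j := by omega
  have hp : p^(j+1) = p * p^j := by ring
  rw [hexp, hp]
  have hre : ((j:ℝ)+1) * ((n.choose (j+1):ℝ) * (p * p^j) * q^((n-1)-j)) * g (j+1)
      = (((j:ℝ)+1) * (n.choose (j+1):ℝ)) * (p * p^j * q^((n-1)-j) * g (j+1)) := by ring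
  push_cast
  push_cast at hre hid
  rw [hre, hid]
  ring

lemma sum_id0 (n : ℕ) (p q : ℝ) :
    ∑ m ∈ range (n+1), (n.choose m : ℝ) * p^m * q^(n-m) = (p+q)^n := by
  rw [add_pow]
  exact Finset.sum_congr rfl fun m _ => by ring

lemma sum_id1 (n : ℕ) (hn : 1 ≤ n) (p q : ℝ) :
    ∑ m ∈ range (n+1), (m:ℝ) * ((n.choose m : ℝ) * p^m * q^(n-m))
      = n * p * (p+q)^(n-1) := by
  have := key_shift n hn p q (fun _ => 1)
  simp only [mul_one] at this
  rw [this]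
  have h2 : n - 1 + 1 = n := by omega
  have := sum_id0 (n-1) p q
  rw [h2] at this
  rw [this]

lemma sum_id2 (n : ℕ) (hn : 2 ≤ n) (p q : ℝ) :
    ∑ m ∈ range (n+1), ((m:ℝ) * ((m:ℝ)-1)) * ((n.choose m : ℝ) * p^m * q^(n-m))
      = n * (n-1) * p^2 * (p+q)^(n-2) := by
  have hre : ∀ m ∈ range (n+1), ((m:ℝ) * ((m:ℝ)-1)) * ((n.choose m : ℝ) * p^m * q^(n-m))
      = (m:ℝ) * ((n.choose m : ℝ) * p^m * q^(n-m)) * (fun m : ℕ => (m:ℝ)-1) m := by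
    intro m _; ring
  rw [Finset.sum_congr rfl hre, key_shift n (by omega) p q _]
  have h2 : n - 1 + 1 = n := by omega
  have hinner : ∑ j ∈ range (n-1+1), (j:ℝ) * (((n-1).choose j : ℝ) * p^j * q^((n-1)-j))
      = (n-1:ℕ) * p * (p+q)^((n-1)-1) := sum_id1 (n-1) (by omega) p q
  have hcongr : ∑ j ∈ range n, ((n-1).choose j : ℝ) * p^j * q^((n-1)-j) * ((fun m : ℕ => (m:ℝ)-1) (j+1))
      = ∑ j ∈ range (n-1+1), (j:ℝ) * (((n-1).choose j : ℝ) * p^j * q^((n-1)-j)) := by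
    rw [h2]
    exact Finset.sum_congr rfl fun j _ => by push_cast; ring
  rw [hcongr, hinner]
  have h3 : (n:ℝ) - 1 = ((n-1 : ℕ) : ℝ) := by
    have : (1:ℕ) ≤ n := by omega
    push_cast [this]; ring
  have h4 : (n-1)-1 = n-2 := by omega
  rw [h4, h3]
  ring

section BinomMoments
variable {Ω : Type*} [MeasurableSpace Ω] {μ : MeasureTheory.Measure Ω} [IsProbabilityMeasure μ]
variable {X : Ω → ℕ} {n : ℕ} {p : ℝ}

lemma binom_ae_le (hX : Measurable X) (hp0 : 0 ≤ p) (hp1 : p ≤ 1)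
    (hb : IsBinomial μ X n p) : ∀ᵐ ω ∂μ, X ω ≤ n := by
  set pmf : ℕ → ℝ := fun m => (n.choose m : ℝ) * p ^ m * (1 - p) ^ (n - m) with hpmf
  have hnonneg : ∀ m, 0 ≤ pmf m := fun m => by
    apply mul_nonneg (mul_nonneg (by positivity) (by positivity))
    have : (0:ℝ) ≤ 1 - p := by linarith
    positivity
  have hμm : ∀ m, μ {ω | X ω = m} = ENNReal.ofReal (pmf m) := fun m => by
    simp only [hpmf]
    rw [← hb m]
    exact (ENNReal.ofReal_toReal (measure_ne_top μ _)).symm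
  have hsum : ∑ m ∈ range (n+1), pmf m = 1 := by
    have := sum_id0 n p (1-p)
    simp only [hpmf]
    rw [this]; norm_num
  have hmeasm : ∀ m : ℕ, MeasurableSet {ω | X ω = m} := fun m =>
    hX (measurableSet_singleton m)
  have hdisj : Set.PairwiseDisjoint ↑(range (n+1)) (fun m => {ω | X ω = m}) := by
    intro a _ b _ hab
    simp only [Function.onFun, Set.disjoint_left]
    intro ω ha hb'
    exact hab (ha.symm.trans hb')
  have hcup : μ (⋃ m ∈ range (n+1), {ω | X ω = m}) = 1 := by
    rw [measure_biUnion_finset hdisj (fun m _ => hmeasm m)]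
    have : ∀ m ∈ range (n+1), μ {ω | X ω = m} = ENNReal.ofReal (pmf m) := fun m _ => hμm m
    rw [Finset.sum_congr rfl this, ← ENNReal.ofReal_sum_of_nonneg (fun m _ => hnonneg m), hsum]
    simp
  have hset : (⋃ m ∈ range (n+1), {ω | X ω = m}) = {ω | X ω ≤ n} := by
    ext ω
    simp only [Set.mem_iUnion, Set.mem_setOf_eq, Finset.mem_range]
    constructor
    · rintro ⟨m, hm, hXm⟩; omega
    · intro h; exact ⟨X ω, by omega, rfl⟩
  rw [hset] at hcup
  have hmeas2 : MeasurableSet {ω | X ω ≤ n} := hX (measurableSet_Iic (α := ℕ))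
  have : μ {ω | X ω ≤ n}ᶜ = 0 := by
    rw [measure_compl hmeas2 (measure_ne_top μ _), hcup, measure_univ]
    simp
  filter_upwards [measure_eq_zero_iff_ae_notMem.mp this] with ω hω
  simpa using hω

lemma binom_integral (hX : Measurable X) (hp0 : 0 ≤ p) (hp1 : p ≤ 1)
    (hb : IsBinomial μ X n p) (g : ℕ → ℝ) :
    ∫ ω, g (X ω) ∂μ
      = ∑ m ∈ range (n+1), g m * ((n.choose m : ℝ) * p ^ m * (1 - p) ^ (n - m)) := by
  have hmeasm : ∀ m : ℕ, MeasurableSet {ω | X ω = m} := fun m =>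
    hX (measurableSet_singleton m)
  have hae := binom_ae_le hX hp0 hp1 hb
  have h1 : ∫ ω, g (X ω) ∂μ
      = ∫ ω, (∑ m ∈ range (n+1), Set.indicator {ω' | X ω' = m} (fun _ => g m) ω) ∂μ := by
    apply integral_congr_ae
    filter_upwards [hae] with ω hω
    simp only [Set.indicator_apply, Set.mem_setOf_eq]
    rw [Finset.sum_ite_eq (range (n+1)) (X ω) g]
    · simp [Finset.mem_range, Nat.lt_succ_iff, hω]
  rw [h1, integral_finset_sum]
  · refine Finset.sum_congr rfl fun m _ => ?_
    rw [integral_indicator_const (g m) (hmeasm m)]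
    rw [measureReal_def, hb m]
    simp [mul_comm]
  · intro m _
    exact (integrable_const (g m)).indicator (hmeasm m)

end BinomMoments

section BinomMoments2
variable {Ω : Type*} [MeasurableSpace Ω] {μ : MeasureTheory.Measure Ω} [IsProbabilityMeasure μ]
variable {X : Ω → ℕ} {n : ℕ} {p : ℝ}

lemma binom_measR (hX : Measurable X) : Measurable (fun ω => (X ω : ℝ)) :=
  Measurable.comp (measurable_from_top) hX

lemma binom_memL2 (hX : Measurable X) (hp0 : 0 ≤ p) (hp1 : p ≤ 1)
    (hb : IsBinomial μ X n p) : MemLp (fun ω => (X ω : ℝ)) 2 μ := by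
  apply MemLp.of_bound (binom_measR hX).aestronglyMeasurable (n : ℝ)
  filter_upwards [binom_ae_le hX hp0 hp1 hb] with ω hω
  rw [Real.norm_natCast]
  exact_mod_cast hω

lemma binom_mean (hX : Measurable X) (hn : 1 ≤ n) (hp0 : 0 ≤ p) (hp1 : p ≤ 1)
    (hb : IsBinomial μ X n p) : ∫ ω, (X ω : ℝ) ∂μ = n * p := by
  have h := binom_integral hX hp0 hp1 hb (fun m => (m:ℝ))
  rw [h]
  have := sum_id1 n hn p (1-p)
  rw [this]
  norm_num

lemma binom_variance (hX : Measurable X) (hn : 2 ≤ n) (hp0 : 0 ≤ p) (hp1 : p ≤ 1)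
    (hb : IsBinomial μ X n p) :
    variance (fun ω => (X ω : ℝ)) μ = n * (p * (1-p)) := by
  rw [variance_eq_sub (binom_memL2 hX hp0 hp1 hb)]
  have hsq : μ[(fun ω => (X ω : ℝ)) ^ 2] = ∫ ω, ((X ω : ℝ))^2 ∂μ := by
    congr 1
  have h2 : ∫ ω, ((X ω : ℝ))^2 ∂μ = n * ((n:ℝ)-1) * p^2 + n * p := by
    have h := binom_integral hX hp0 hp1 hb (fun m => (m:ℝ)^2)
    rw [h]
    have hsplit : ∀ m ∈ range (n+1),
        ((m:ℝ))^2 * ((n.choose m : ℝ) * p ^ m * (1 - p) ^ (n - m))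
        = ((m:ℝ) * ((m:ℝ)-1)) * ((n.choose m : ℝ) * p ^ m * (1 - p) ^ (n - m))
          + (m:ℝ) * ((n.choose m : ℝ) * p ^ m * (1 - p) ^ (n - m)) := by
      intro m _; ring
    rw [Finset.sum_congr rfl hsplit, Finset.sum_add_distrib,
      sum_id2 n hn p (1-p), sum_id1 n (by omega) p (1-p)]
    norm_num
  rw [hsq, h2, binom_mean hX (by omega) hp0 hp1 hb]
  ring

end BinomMoments2


lemma A1_nonneg_two (d : ℝ) (hd : 1 ≤ d) :
    0 ≤ 2 - 6/(2:ℝ) - d^2/2 + 8*d^2/2^2 - 6*d^2/2^3 + 12*d*((2:ℝ)-1)/2^2 := by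
  nlinarith [sq_nonneg d]

lemma A1_nonneg_ge3 (x d : ℝ) (hx : 3 ≤ x) (hd0 : 0 ≤ d) (hd : d ≤ 3/2) :
    0 ≤ 2 - 6/x - d^2/x + 8*d^2/x^2 - 6*d^2/x^3 + 12*d*(x-1)/x^2 := by
  have hx0 : (0:ℝ) < x := by linarith
  have key : 0 ≤ 2*x^3 - 6*x^2 - d^2*x^2 + 8*d^2*x - 6*d^2 + 12*d*x*(x-1) := by
    nlinarith [sq_nonneg d, mul_nonneg hd0 (by linarith : (0:ℝ) ≤ x - 1),
      mul_nonneg (mul_nonneg hd0 hx0.le) (by linarith : (0:ℝ) ≤ x - 1),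
      mul_nonneg (sub_nonneg.2 hd) (sub_nonneg.2 hd0),
      sq_nonneg (x - 3), mul_nonneg (sq_nonneg (x-3)) hx0.le,
      mul_nonneg (mul_nonneg (sub_nonneg.2 hd) hd0) (sq_nonneg (x-3)),
      mul_nonneg (mul_nonneg (sub_nonneg.2 hd) hd0) hx0.le,
      mul_nonneg (mul_nonneg (sub_nonneg.2 hd) hd0) (by nlinarith [sq_nonneg (x-4)] : (0:ℝ) ≤ x^2 - 8*x + 6 + 10)]
  have heq : 2 - 6/x - d^2/x + 8*d^2/x^2 - 6*d^2/x^3 + 12*d*(x-1)/x^2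
      = (2*x^3 - 6*x^2 - d^2*x^2 + 8*d^2*x - 6*d^2 + 12*d*x*(x-1)) / x^3 := by
    field_simp
  rw [heq]
  exact div_nonneg key (by positivity)


section DetCore
variable {N p c ph : ℝ}

lemma det_facts (hN : 12 ≤ N) (hp0 : 0 < p) (hp1 : p < 1)
    (hc0 : 0 < c) (hc1 : c ≤ 1)
    (hNt : 1 / (N * (p*(1-p))) ≤ c) (hph : |ph - p| ≤ c * (p*(1-p))) :
    0 < p*(1-p) ∧ p*(1-p) ≤ 1/4 ∧ 1/N ≤ c*(p*(1-p)) ∧ 0 ≤ ph ∧ ph ≤ 1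
      ∧ |ph*(1-ph) - p*(1-p)| ≤ c*(p*(1-p)) ∧ ph*(1-ph) ≤ 2*(p*(1-p)) := by
  set θ := p*(1-p) with hθdef
  have hθ : 0 < θ := mul_pos hp0 (by linarith)
  have hθ4 : θ ≤ 1/4 := by nlinarith [sq_nonneg (p - 1/2)]
  have hN0 : (0:ℝ) < N := by linarith
  have hNinv : 1/N ≤ c*θ := by
    rw [div_le_iff₀ (mul_pos hN0 hθ)] at hNt
    rw [div_le_iff₀ hN0]
    nlinarith
  have habs := abs_le.mp hph
  have hph0 : 0 ≤ ph := by nlinarith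
  have hph1 : ph ≤ 1 := by nlinarith
  have hu : |ph*(1-ph) - θ| ≤ c*θ := by
    have hid : ph*(1-ph) - θ = (ph - p)*(1 - ph - p) := by rw [hθdef]; ring
    rw [hid, abs_mul]
    have h2 : |1 - ph - p| ≤ 1 := abs_le.mpr ⟨by linarith, by linarith⟩
    calc |ph-p| * |1-ph-p| ≤ (c*θ) * 1 :=
          mul_le_mul hph h2 (abs_nonneg _) (by positivity)
      _ = c*θ := mul_one _
  have huab := abs_le.mp hu
  exact ⟨hθ, hθ4, hNinv, hph0, hph1, hu, by nlinarith⟩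

lemma det_L (hN : 12 ≤ N) (hp0 : 0 < p) (hp1 : p < 1)
    (hc0 : 0 < c) (hc1 : c ≤ 1)
    (hNt : 1 / (N * (p*(1-p))) ≤ c) (hph : |ph - p| ≤ c * (p*(1-p))) :
    |(N/(N-1)) * (ph*(1-ph)) - p*(1-p)| ≤ 4*(c*(p*(1-p))) := by
  obtain ⟨hθ, hθ4, hNinv, hph0, hph1, hu, hu2⟩ := det_facts hN hp0 hp1 hc0 hc1 hNt hph
  set θ := p*(1-p)
  set u := ph*(1-ph) with hudef
  have hN0 : (0:ℝ) < N := by linarith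
  have hN1 : (0:ℝ) < N - 1 := by linarith
  have hid : (N/(N-1))*u - θ = (N/(N-1))*(u - θ) + θ*(1/(N-1)) := by
    field_simp
    ring
  have hq : N/(N-1) ≤ 2 := by rw [div_le_iff₀ hN1]; linarith
  have hq0 : (0:ℝ) ≤ N/(N-1) := by positivity
  have t1 : |(N/(N-1))*(u-θ)| ≤ 2*(c*θ) := by
    rw [abs_mul, abs_of_nonneg hq0]
    nlinarith [abs_nonneg (u-θ)]
  have hinvN1 : 1/(N-1) ≤ 2*(1/N) := by
    rw [div_le_iff₀ hN1, mul_comm, ← mul_assoc]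
    nlinarith [mul_pos hN0 hN1, (by field_simp : (1/N)*N = 1)]
  have t2 : |θ*(1/(N-1))| ≤ 2*(c*θ) := by
    rw [abs_of_nonneg (by positivity)]
    nlinarith [mul_le_mul_of_nonneg_left hinvN1 hθ.le,
      mul_le_mul_of_nonneg_left hNinv hθ.le,
      mul_le_mul_of_nonneg_left hθ4 (mul_nonneg hc0.le hθ.le)]
  calc |(N/(N-1))*u - θ| = |(N/(N-1))*(u - θ) + θ*(1/(N-1))| := by rw [hid]
    _ ≤ |(N/(N-1))*(u-θ)| + |θ*(1/(N-1))| := abs_add_le _ _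
    _ ≤ 2*(c*θ) + 2*(c*θ) := add_le_add t1 t2
    _ = 4*(c*θ) := by ring

lemma K_bounds (hN : 12 ≤ N) :
    1 ≤ N^3/((N-1)*(N-2)*(N-3)) ∧ N^3/((N-1)*(N-2)*(N-3)) ≤ 2
      ∧ N^3/((N-1)*(N-2)*(N-3)) - 1 ≤ 15*(1/N) := by
  have hN0 : (0:ℝ) < N := by linarith
  have hN1 : (0:ℝ) < N - 1 := by linarith
  have hN2 : (0:ℝ) < N - 2 := by linarith
  have hN3 : (0:ℝ) < N - 3 := by linarith
  have hden : (0:ℝ) < (N-1)*(N-2)*(N-3) := by positivity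
  refine ⟨?_, ?_, ?_⟩
  · rw [le_div_iff₀ hden]; nlinarith
  · rw [div_le_iff₀ hden]
    nlinarith [sq_nonneg (N-12), mul_nonneg (sq_nonneg (N-12)) hN0.le]
  · rw [div_sub' hden.ne', div_le_iff₀ hden]
    have h1N : 1/N * N = 1 := by field_simp
    nlinarith [mul_pos hN0 hden, sq_nonneg (N-12), mul_nonneg (sq_nonneg (N-12)) hN0.le]

lemma det_Q (hN : 12 ≤ N) (hp0 : 0 < p) (hp1 : p < 1)
    (hc0 : 0 < c) (hc1 : c ≤ 1)
    (hNt : 1 / (N * (p*(1-p))) ≤ c) (hph : |ph - p| ≤ c * (p*(1-p))) :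
    |(N^3/((N-1)*(N-2)*(N-3))) * (ph*(ph-1/N)*(1-ph)*(1-ph-1/N)) - (p*(1-p))^2|
      ≤ 14*(c*(p*(1-p))^2) := by
  obtain ⟨hθ, hθ4, hNinv, hph0, hph1, hu, hu2⟩ := det_facts hN hp0 hp1 hc0 hc1 hNt hph
  obtain ⟨hK1, hK2, hK15⟩ := K_bounds hN
  set θ := p*(1-p)
  set u := ph*(1-ph) with hudef
  set K := N^3/((N-1)*(N-2)*(N-3)) with hKdef
  have hN0 : (0:ℝ) < N := by linarith
  have huab := abs_le.mp hu
  have hu0 : 0 ≤ u := mul_nonneg hph0 (by linarith)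
  set R := ph*(ph-1/N)*(1-ph)*(1-ph-1/N) with hRdef
  have hRu : R = u*(u - 1/N + (1/N)^2) := by rw [hRdef, hudef]; ring
  have hNinv0 : (0:ℝ) ≤ 1/N := by positivity
  have hNinv1 : 1/N ≤ 1 := by rw [div_le_iff₀ hN0]; linarith
  have hRu2 : |R - u^2| ≤ 2*(c*θ^2) := by
    have hid : R - u^2 = -(u*(1/N - (1/N)^2)) := by rw [hRu]; ring
    have hx : (0:ℝ) ≤ 1/N - (1/N)^2 := by nlinarith [mul_nonneg hNinv0 (sub_nonneg.2 hNinv1)]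
    rw [hid, abs_neg, abs_of_nonneg (mul_nonneg hu0 hx)]
    nlinarith [mul_le_mul_of_nonneg_right hu2 hx, mul_le_mul_of_nonneg_left hNinv hθ.le,
      mul_nonneg hu0 (sq_nonneg (1/N))]
  have huθ : |u^2 - θ^2| ≤ 3*(c*θ^2) := by
    have hid : u^2 - θ^2 = (u - θ)*(u + θ) := by ring
    rw [hid, abs_mul, abs_of_nonneg (by nlinarith : (0:ℝ) ≤ u + θ)]
    nlinarith [abs_nonneg (u - θ)]
  have hRθ : |R - θ^2| ≤ 5*(c*θ^2) := by
    calc |R - θ^2| = |(R - u^2) + (u^2 - θ^2)| := by ring_nf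
      _ ≤ |R - u^2| + |u^2 - θ^2| := abs_add_le _ _
      _ ≤ 2*(c*θ^2) + 3*(c*θ^2) := add_le_add hRu2 huθ
      _ = 5*(c*θ^2) := by ring
  have hid : K * R - θ^2 = K*(R - θ^2) + (K-1)*θ^2 := by ring
  have t1 : |K*(R-θ^2)| ≤ 2*(5*(c*θ^2)) := by
    rw [abs_mul, abs_of_nonneg (by linarith : (0:ℝ) ≤ K)]
    nlinarith [abs_nonneg (R - θ^2)]
  have t2 : |(K-1)*θ^2| ≤ 4*(c*θ^2) := by
    rw [abs_mul, abs_of_nonneg (by linarith : (0:ℝ) ≤ K - 1),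
      abs_of_nonneg (by positivity : (0:ℝ) ≤ θ^2)]
    nlinarith [mul_le_mul_of_nonneg_right hK15 (sq_nonneg θ),
      mul_le_mul_of_nonneg_right hNinv (sq_nonneg θ),
      mul_le_mul_of_nonneg_left hθ4 (mul_nonneg hc0.le (sq_nonneg θ))]
  calc |K * R - θ^2| = |K*(R - θ^2) + (K-1)*θ^2| := by rw [hid]
    _ ≤ |K*(R-θ^2)| + |(K-1)*θ^2| := abs_add_le _ _
    _ ≤ 2*(5*(c*θ^2)) + 4*(c*θ^2) := add_le_add t1 t2
    _ = 14*(c*θ^2) := by ring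

lemma det_core {A : ℝ} (hN : 12 ≤ N) (hp0 : 0 < p) (hp1 : p < 1)
    (hc0 : 0 < c) (hc1 : c ≤ 1) (hA : 0 ≤ A)
    (hNt : 1 / (N * (p*(1-p))) ≤ c) (hph : |ph - p| ≤ c * (p*(1-p))) :
    |(1/N) * ((N/(N-1)) * (ph*(1-ph)) - p*(1-p))
      + A * ((N^3/((N-1)*(N-2)*(N-3))) * (ph*(ph-1/N)*(1-ph)*(1-ph-1/N)) - (p*(1-p))^2)|
      ≤ 20*c*(A*(p*(1-p))^2 + (p*(1-p))/N) := by
  obtain ⟨hθ, hθ4, hNinv, hph0, hph1, hu, hu2⟩ := det_facts hN hp0 hp1 hc0 hc1 hNt hph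
  have hL := det_L hN hp0 hp1 hc0 hc1 hNt hph
  have hQ := det_Q hN hp0 hp1 hc0 hc1 hNt hph
  set θ := p*(1-p)
  have hN0 : (0:ℝ) < N := by linarith
  have hNinv0 : (0:ℝ) ≤ 1/N := by positivity
  calc |(1/N) * ((N/(N-1)) * (ph*(1-ph)) - θ)
        + A * ((N^3/((N-1)*(N-2)*(N-3))) * (ph*(ph-1/N)*(1-ph)*(1-ph-1/N)) - θ^2)|
      ≤ |(1/N) * ((N/(N-1)) * (ph*(1-ph)) - θ)|
        + |A * ((N^3/((N-1)*(N-2)*(N-3))) * (ph*(ph-1/N)*(1-ph)*(1-ph-1/N)) - θ^2)| :=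
        abs_add_le _ _
    _ ≤ (1/N)*(4*(c*θ)) + A*(14*(c*θ^2)) := by
        apply add_le_add
        · rw [abs_mul, abs_of_nonneg hNinv0]
          exact mul_le_mul_of_nonneg_left hL hNinv0
        · rw [abs_mul, abs_of_nonneg hA]
          exact mul_le_mul_of_nonneg_left hQ hA
    _ ≤ 20*c*(A*θ^2 + θ/N) := by
        have hθN : θ/N = θ*(1/N) := by ring
        rw [hθN]
        nlinarith [mul_nonneg (mul_nonneg hc0.le hθ.le) hNinv0,
          mul_nonneg (mul_nonneg hc0.le (sq_nonneg θ)) hA]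

end DetCore


lemma hc_lower (k : ℕ) (hk : 1 ≤ k) (n : ℕ → ℕ) (hn : ∀ i ∈ range k, 2 ≤ n i)
    (θ : ℝ) (hθ : 0 < θ) :
    1/(2*((∑ i ∈ range k, (n i : ℝ))*θ))
      ≤ (θ^3 * (∑ i ∈ range k, 1/(n i:ℝ)) + θ * (∑ i ∈ range k, 1/(n i:ℝ)^3))
        / ((k*θ^2 + θ/(∑ i ∈ range k, (n i : ℝ))^2 * (∑ i ∈ range k, 1/(n i:ℝ)))^2) := by
  set N := ∑ i ∈ range k, (n i : ℝ) with hNdef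
  set S1 := ∑ i ∈ range k, 1/(n i:ℝ) with hS1def
  set S2 := ∑ i ∈ range k, 1/(n i:ℝ)^2 with hS2def
  set S3 := ∑ i ∈ range k, 1/(n i:ℝ)^3 with hS3def
  have hni : ∀ i ∈ range k, (2:ℝ) ≤ (n i : ℝ) := fun i hi => by exact_mod_cast hn i hi
  have hnipos : ∀ i ∈ range k, (0:ℝ) < (n i : ℝ) := fun i hi => by linarith [hni i hi]
  have hN2k : 2*(k:ℝ) ≤ N := by
    rw [hNdef]
    calc 2*(k:ℝ) = ∑ _i ∈ range k, (2:ℝ) := by simp [mul_comm]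
      _ ≤ _ := Finset.sum_le_sum hni
  have hk1 : (1:ℝ) ≤ (k:ℝ) := by exact_mod_cast hk
  have hN0 : (0:ℝ) < N := by linarith
  have hne : (Finset.range k).Nonempty := Finset.nonempty_range_iff.mpr (by omega)
  have hS1pos : 0 < S1 :=
    Finset.sum_pos (fun i hi => by have := hnipos i hi; positivity) hne
  have hS3pos : 0 < S3 :=
    Finset.sum_pos (fun i hi => by have := hnipos i hi; positivity) hne
  have hS2pos : 0 < S2 :=
    Finset.sum_pos (fun i hi => by have := hnipos i hi; positivity) hne
  -- Cauchy-Schwarz chain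
  have claim1 : (k:ℝ)^2 ≤ N*S1 := by
    have := Finset.sum_sq_le_sum_mul_sum_of_sq_eq_mul (range k)
      (r := fun _ => (1:ℝ)) (f := fun i => (n i : ℝ)) (g := fun i => 1/(n i:ℝ))
      (fun i hi => (hnipos i hi).le) (fun i hi => by positivity)
      (fun i hi => by have h := (hnipos i hi).ne'; field_simp)
    rw [hNdef, hS1def]
    simpa using this
  have claim2 : S1^2 ≤ (k:ℝ)*S2 := by
    have := Finset.sum_sq_le_sum_mul_sum_of_sq_eq_mul (range k)
      (r := fun i => 1/(n i:ℝ)) (f := fun _ => (1:ℝ)) (g := fun i => 1/(n i:ℝ)^2)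
      (fun i hi => by norm_num) (fun i hi => by have := hnipos i hi; positivity)
      (fun i hi => by have h := (hnipos i hi).ne'; field_simp)
    rw [hS1def, hS2def]
    simpa using this
  have claim3 : S2^2 ≤ S1*S3 := by
    have := Finset.sum_sq_le_sum_mul_sum_of_sq_eq_mul (range k)
      (r := fun i => 1/(n i:ℝ)^2) (f := fun i => 1/(n i:ℝ)) (g := fun i => 1/(n i:ℝ)^3)
      (fun i hi => by have := hnipos i hi; positivity)
      (fun i hi => by have := hnipos i hi; positivity)
      (fun i hi => by have h := (hnipos i hi).ne'; field_simp)
    rw [hS2def, hS1def, hS3def]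
    simpa using this
  have h23 : S1^4 ≤ (k:ℝ)^2*(S1*S3) := by
    nlinarith [mul_self_le_mul_self (sq_nonneg S1) claim2,
      mul_le_mul_of_nonneg_left claim3 (by positivity : (0:ℝ) ≤ (k:ℝ)^2)]
  have h24 : S1^3 ≤ (k:ℝ)^2*S3 := by nlinarith [h23, hS1pos]
  have h25 : (k:ℝ)^6 ≤ (N*S1)^3 := by
    have := pow_le_pow_left₀ (by positivity : (0:ℝ) ≤ (k:ℝ)^2) claim1 3
    calc (k:ℝ)^6 = ((k:ℝ)^2)^3 := by ring
      _ ≤ (N*S1)^3 := this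
  have hk2 : (0:ℝ) < (k:ℝ)^2 := by positivity
  have hS3lb : (k:ℝ)^4 ≤ S3*N^3 := by
    nlinarith [mul_le_mul_of_nonneg_left h24 (by positivity : (0:ℝ) ≤ N^3), h25, hk2,
      mul_pos hS3pos (by positivity : (0:ℝ) < N^3)]
  have hS1ub : S1 ≤ (k:ℝ)/2 := by
    rw [hS1def]
    calc ∑ i ∈ range k, 1/(n i:ℝ) ≤ ∑ _i ∈ range k, (1:ℝ)/2 := by
          apply Finset.sum_le_sum
          intro i hi
          rw [div_le_div_iff₀ (hnipos i hi) (by norm_num)]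
          linarith [hni i hi]
      _ = (k:ℝ)/2 := by simp [mul_comm]; ring
  -- bound the B term
  set A := (k:ℝ)*θ^2 with hAdef
  set B := θ/N^2 * S1 with hBdef
  have hA0 : 0 < A := by positivity
  have hB0 : 0 ≤ B := by positivity
  have hS1N4 : S1 ≤ N/4 := by linarith
  have hBle : B ≤ θ/(4*N) := by
    rw [hBdef]
    calc θ/N^2 * S1 ≤ θ/N^2 * (N/4) := by
          apply mul_le_mul_of_nonneg_left hS1N4 (by positivity)
      _ = θ/(4*N) := by field_simp
  rw [div_le_div_iff₀ (by positivity) (by positivity)]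
  -- goal : 1 * (A+B)^2 ≤ Num * (2*(N*θ))
  have hD2 : (A+B)^2 ≤ 2*A^2 + 2*(θ/(4*N))^2 := by
    nlinarith [sq_nonneg (A-B), mul_self_le_mul_self hB0 hBle]
  have t1 : 2*A^2 ≤ 2*(N*θ)*(θ^3*S1) := by
    have := mul_le_mul_of_nonneg_left claim1 (by positivity : (0:ℝ) ≤ 2*θ^4)
    nlinarith [this]
  have t2 : 2*(θ/(4*N))^2 ≤ 2*(N*θ)*(θ*S3) := by
    have lhs_eq : 2*(θ/(4*N))^2 = θ^2/(8*N^2) := by field_simp; ring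
    rw [lhs_eq, div_le_iff₀ (by positivity : (0:ℝ) < 8*N^2)]
    have hk4 : (1:ℝ) ≤ (k:ℝ)^4 := by
      calc (1:ℝ) = 1^4 := by norm_num
        _ ≤ (k:ℝ)^4 := pow_le_pow_left₀ (by norm_num) hk1 4
    nlinarith [mul_le_mul_of_nonneg_left hS3lb (by positivity : (0:ℝ) ≤ 16*θ^2),
      mul_le_mul_of_nonneg_left hk4 (by positivity : (0:ℝ) ≤ 16*θ^2), sq_nonneg θ]
  nlinarith [hD2, t1, t2]

end Stmt7Aux


section Stmt7Bridge
open Finset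

namespace BinSetup

variable (S : BinSetup)

lemma nreal_ge : 2*(S.k:ℝ) ≤ S.Nreal := by
  rw [Nreal]
  calc 2*(S.k:ℝ) = ∑ _i ∈ range S.k, (2:ℝ) := by simp [mul_comm]
    _ ≤ _ := Finset.sum_le_sum (fun i hi => by exact_mod_cast S.hn i hi)

lemma n_le_nreal {i : ℕ} (hi : i ∈ range S.k) : (S.n i:ℝ) ≤ S.Nreal := by
  rw [Nreal]
  exact Finset.single_le_sum (f := fun j => (S.n j : ℝ)) (fun j _ => by positivity) hi

lemma pbar_eq {pk : ℝ} (hH0 : ∀ i ∈ range S.k, S.pi i = pk) (hk : 1 ≤ S.k) :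
    S.pbar = pk := by
  have hN0 : (0:ℝ) < S.Nreal := by
    have := S.nreal_ge
    have : (1:ℝ) ≤ (S.k:ℝ) := by exact_mod_cast hk
    linarith [S.nreal_ge]
  rw [pbar]
  rw [show ∑ i ∈ range S.k, (S.n i : ℝ) * S.pi i = S.Nreal * pk by
    rw [Nreal, Finset.sum_mul]
    exact Finset.sum_congr rfl fun i hi => by rw [hH0 i hi]]
  field_simp

lemma sumA2_eq (hk : 1 ≤ S.k) : ∑ i ∈ range S.k, S.A2 i = 1/S.Nreal := by
  have hN0 : (0:ℝ) < S.Nreal := by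
    have h1 : (1:ℝ) ≤ (S.k:ℝ) := by exact_mod_cast hk
    linarith [S.nreal_ge]
  have : ∑ i ∈ range S.k, S.A2 i = (∑ i ∈ range S.k, (S.n i:ℝ))/S.Nreal^2 := by
    rw [Finset.sum_div]
    exact Finset.sum_congr rfl fun i hi => rfl
  rw [this, ← Nreal]
  field_simp

lemma sumA1_nonneg (hk : 2 ≤ S.k) : 0 ≤ ∑ i ∈ range S.k, S.A1 i := by
  apply Finset.sum_nonneg
  intro i hi
  have hn2 : 2 ≤ S.n i := S.hn i hi
  have hk2 : (2:ℝ) ≤ (S.k:ℝ) := by exact_mod_cast hk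
  have hN4 : (4:ℝ) ≤ S.Nreal := by linarith [S.nreal_ge]
  have hN0 : (0:ℝ) < S.Nreal := by linarith
  have hnN : (S.n i:ℝ) ≤ S.Nreal := S.n_le_nreal hi
  rcases eq_or_lt_of_le hn2 with h2 | h3
  · -- n i = 2
    have hc : (S.n i : ℝ) = 2 := by exact_mod_cast h2.symm
    have hd : S.d i = 2*(1 - 2/S.Nreal) := by
      rw [d, hc]; norm_num
    have hd1 : 1 ≤ S.d i := by
      rw [hd]
      have : 2/S.Nreal ≤ 1/2 := by
        rw [div_le_div_iff₀ hN0 (by norm_num)]; linarith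
      linarith
    have := A1_nonneg_two (S.d i) hd1
    rw [A1, hc]
    convert this using 2 <;> norm_num
  · -- 3 ≤ n i
    have h3' : 3 ≤ S.n i := h3
    have hx3 : (3:ℝ) ≤ (S.n i:ℝ) := by exact_mod_cast h3'
    have hx0 : (0:ℝ) < (S.n i:ℝ) := by linarith
    have hfrac : (S.n i:ℝ)/((S.n i:ℝ)-1) ≤ 3/2 := by
      rw [div_le_div_iff₀ (by linarith) (by norm_num)]; linarith
    have hfrac0 : (0:ℝ) ≤ (S.n i:ℝ)/((S.n i:ℝ)-1) := by
      apply div_nonneg hx0.le; linarith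
    have h1N : 0 ≤ 1 - (S.n i:ℝ)/S.Nreal := by
      have : (S.n i:ℝ)/S.Nreal ≤ 1 := by
        rw [div_le_one hN0]; exact hnN
      linarith
    have h1N1 : 1 - (S.n i:ℝ)/S.Nreal ≤ 1 := by
      have : 0 ≤ (S.n i:ℝ)/S.Nreal := by positivity
      linarith
    have hd0 : 0 ≤ S.d i := by rw [d]; exact mul_nonneg hfrac0 h1N
    have hd32 : S.d i ≤ 3/2 := by
      rw [d]
      calc (S.n i:ℝ)/((S.n i:ℝ)-1) * (1 - (S.n i:ℝ)/S.Nreal)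
          ≤ (3/2) * 1 := mul_le_mul hfrac h1N1 h1N (by norm_num)
        _ = 3/2 := by norm_num
    exact A1_nonneg_ge3 (S.n i : ℝ) (S.d i) hx3 hd0 hd32

lemma pbarHat_eq (ω : S.Ω) :
    S.pbarHat ω = (∑ i ∈ range S.k, (S.X i ω:ℝ))/S.Nreal := by
  rw [pbarHat]
  congr 1
  refine Finset.sum_congr rfl fun i hi => ?_
  have hn0 : (S.n i : ℝ) ≠ 0 := by
    have := S.hn i hi
    positivity
  rw [piHat, mul_div_cancel₀]
  exact hn0

lemma inner_sum_eq (f : ℕ → ℝ) :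
    ∑ l ∈ Finset.Icc 1 4, f l = f 1 + f 2 + f 3 + f 4 := by
  rw [show (4:ℕ) = 3 + 1 from rfl, Finset.sum_Icc_succ_top (by norm_num),
    show (3:ℕ) = 2 + 1 from rfl, Finset.sum_Icc_succ_top (by norm_num),
    show (2:ℕ) = 1 + 1 from rfl, Finset.sum_Icc_succ_top (by norm_num),
    Finset.Icc_self, Finset.sum_singleton]

lemma decomp (hk : 1 ≤ S.k) (hN : 12 ≤ S.Nreal) (ω : S.Ω) :
    S.V1starHat ω - S.V1star
      = (1/S.Nreal) * ((S.Nreal/(S.Nreal-1)) * (S.pbarHat ω*(1-S.pbarHat ω))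
            - S.pbar*(1-S.pbar))
        + (∑ i ∈ range S.k, S.A1 i) *
          ((S.Nreal^3/((S.Nreal-1)*(S.Nreal-2)*(S.Nreal-3)))
              * (S.pbarHat ω*(S.pbarHat ω-1/S.Nreal)*(1-S.pbarHat ω)*(1-S.pbarHat ω-1/S.Nreal))
            - (S.pbar*(1-S.pbar))^2) := by
  have hN0 : S.Nreal ≠ 0 := by intro h; rw [h] at hN; norm_num at hN
  have hN1 : S.Nreal - 1 ≠ 0 := by intro h; nlinarith [hN]
  have hN2 : S.Nreal - 2 ≠ 0 := by intro h; nlinarith [hN]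
  have hN3 : S.Nreal - 3 ≠ 0 := by intro h; nlinarith [hN]
  set N := S.Nreal with hNdef
  set ph := S.pbarHat ω with hphdef
  have heta : ∀ l : ℕ, S.etaHatPooled l ω
      = (N^l / ∏ j ∈ range l, (N - (j:ℝ))) * ∏ j ∈ range l, (ph - (j:ℝ)/N) := fun l => rfl
  have h1 : S.etaHatPooled 1 ω = (N^1/(N - 0)) * (ph - 0/N) := by
    rw [heta 1]
    simp [Finset.prod_range_succ]
  have h2 : S.etaHatPooled 2 ω = (N^2/((N-0)*(N-1))) * ((ph - 0/N)*(ph - 1/N)) := by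
    rw [heta 2]
    simp [Finset.prod_range_succ]
  have h3 : S.etaHatPooled 3 ω
      = (N^3/((N-0)*(N-1)*(N-2))) * ((ph - 0/N)*(ph - 1/N)*(ph - 2/N)) := by
    rw [heta 3]
    simp [Finset.prod_range_succ]
  have h4 : S.etaHatPooled 4 ω
      = (N^4/((N-0)*(N-1)*(N-2)*(N-3))) * ((ph - 0/N)*(ph - 1/N)*(ph - 2/N)*(ph - 3/N)) := by
    rw [heta 4]
    simp [Finset.prod_range_succ]
  have hVhat : S.V1starHat ω
      = (∑ i ∈ range S.k, S.A2 i) * (S.etaHatPooled 1 ω - S.etaHatPooled 2 ω)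
        + (∑ i ∈ range S.k, S.A1 i) *
            (S.etaHatPooled 2 ω - 2*S.etaHatPooled 3 ω + S.etaHatPooled 4 ω) := by
    rw [V1starHat]
    have hterm : ∀ i ∈ range S.k,
        ∑ l ∈ Finset.Icc 1 4, S.a l i * S.etaHatPooled l ω
          = S.A2 i * (S.etaHatPooled 1 ω - S.etaHatPooled 2 ω)
            + S.A1 i * (S.etaHatPooled 2 ω - 2*S.etaHatPooled 3 ω + S.etaHatPooled 4 ω) := by
      intro i _
      rw [BinSetup.inner_sum_eq (fun l => S.a l i * S.etaHatPooled l ω)]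
      simp only [BinSetup.a]
      norm_num
      ring
    rw [Finset.sum_congr rfl hterm, Finset.sum_add_distrib, ← Finset.sum_mul, ← Finset.sum_mul]
  have hcomb1 : S.etaHatPooled 1 ω - S.etaHatPooled 2 ω = (N/(N-1)) * (ph*(1-ph)) := by
    rw [h1, h2]
    field_simp
    ring
  have hcomb2 : S.etaHatPooled 2 ω - 2*S.etaHatPooled 3 ω + S.etaHatPooled 4 ω
      = (N^3/((N-1)*(N-2)*(N-3))) * (ph*(ph-1/N)*(1-ph)*(1-ph-1/N)) := by
    rw [h2, h3, h4]
    field_simp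
    ring
  rw [hVhat, hcomb1, hcomb2, S.sumA2_eq hk, V1star, S.sumA2_eq hk]
  ring

end BinSetup

end Stmt7Bridge

/-- ratio consistency of the pooled estimator `𝒱̂_{1*}`: under `H₀` with
`π ≤ δ < 1`, `nᵢ ≥ 2` and the stated condition (with `θ̃ = π̄(1−π̄)`),
`𝒱̂_{1*}/𝒱_{1*} → 1` in probability as `k → ∞`. -/
theorem stmt_7 (S : ℕ → BinSetup) (hSk : ∀ k, (S k).k = k)
    (p : ℕ → ℝ) (hH0 : ∀ k, ∀ i ∈ Finset.range (S k).k, (S k).pi i = p k)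
    (hp : ∀ k, 0 < p k) (δ : ℝ) (hδ : δ < 1) (hpδ : ∀ k, p k ≤ δ)
    (hc : Tendsto (fun k : ℕ =>
        (((S k).pbar * (1 - (S k).pbar)) ^ 3 * ∑ i ∈ Finset.range (S k).k, 1 / ((S k).n i : ℝ)
            + ((S k).pbar * (1 - (S k).pbar))
                * ∑ i ∈ Finset.range (S k).k, 1 / ((S k).n i : ℝ) ^ 3)
          / ((k : ℝ) * ((S k).pbar * (1 - (S k).pbar)) ^ 2
              + ((S k).pbar * (1 - (S k).pbar)) / (S k).Nreal ^ 2
                  * ∑ i ∈ Finset.range (S k).k, 1 / ((S k).n i : ℝ)) ^ 2)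
      atTop (nhds 0)) :
    ∀ ε : ℝ, 0 < ε →
      Tendsto (fun k : ℕ =>
          ((S k).μ {ω | ε ≤ |(S k).V1starHat ω / (S k).V1star - 1|}).toReal)
        atTop (nhds 0) := by
  intro ε hε
  set c := min ε 1 / 41 with hcdef
  have hc0 : 0 < c := by
    rw [hcdef]
    exact div_pos (lt_min hε one_pos) (by norm_num)
  have hc1 : c ≤ 1 := by
    rw [hcdef]
    have : min ε 1 ≤ 1 := min_le_right _ _
    linarith
  have h20c : 20*c ≤ ε/2 := by
    rw [hcdef]
    have : min ε 1 ≤ ε := min_le_left _ _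
    linarith
  have hp1 : ∀ k, p k < 1 := fun k => lt_of_le_of_lt (hpδ k) hδ
  have hpbar : ∀ k : ℕ, 1 ≤ k → (S k).pbar = p k := fun k hk =>
    (S k).pbar_eq (hH0 k) (by rw [hSk]; exact hk)
  have hθpos : ∀ k : ℕ, 1 ≤ k → 0 < (S k).pbar * (1 - (S k).pbar) := by
    intro k hk
    rw [hpbar k hk]
    exact mul_pos (hp k) (by linarith [hp1 k])
  have hN2k : ∀ k : ℕ, 2*(k:ℝ) ≤ (S k).Nreal := fun k => by
    have h := (S k).nreal_ge
    rw [hSk] at h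
    exact h
  -- Step 1 : 1/(N θ) → 0
  have hle : ∀ k : ℕ, 1 ≤ k →
      1/(2*((S k).Nreal * ((S k).pbar * (1 - (S k).pbar))))
        ≤ (((S k).pbar * (1 - (S k).pbar)) ^ 3 * ∑ i ∈ Finset.range (S k).k, 1 / ((S k).n i : ℝ)
            + ((S k).pbar * (1 - (S k).pbar))
                * ∑ i ∈ Finset.range (S k).k, 1 / ((S k).n i : ℝ) ^ 3)
          / ((k : ℝ) * ((S k).pbar * (1 - (S k).pbar)) ^ 2
              + ((S k).pbar * (1 - (S k).pbar)) / (S k).Nreal ^ 2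
                  * ∑ i ∈ Finset.range (S k).k, 1 / ((S k).n i : ℝ)) ^ 2 := by
    intro k hk
    have hnk : ∀ i ∈ Finset.range k, 2 ≤ (S k).n i := fun i hi =>
      (S k).hn i (by rwa [hSk])
    have h := hc_lower k hk (S k).n hnk ((S k).pbar * (1 - (S k).pbar)) (hθpos k hk)
    simp only [BinSetup.Nreal, hSk]
    exact h
  have htends : Tendsto (fun k : ℕ =>
      1/((S k).Nreal * ((S k).pbar * (1 - (S k).pbar)))) atTop (nhds 0) := by
    have h2 : Tendsto (fun k : ℕ => 2 *
        ((((S k).pbar * (1 - (S k).pbar)) ^ 3 * ∑ i ∈ Finset.range (S k).k, 1 / ((S k).n i : ℝ)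
            + ((S k).pbar * (1 - (S k).pbar))
                * ∑ i ∈ Finset.range (S k).k, 1 / ((S k).n i : ℝ) ^ 3)
          / ((k : ℝ) * ((S k).pbar * (1 - (S k).pbar)) ^ 2
              + ((S k).pbar * (1 - (S k).pbar)) / (S k).Nreal ^ 2
                  * ∑ i ∈ Finset.range (S k).k, 1 / ((S k).n i : ℝ)) ^ 2))
        atTop (nhds 0) := by
      have := hc.const_mul (2:ℝ)
      simpa using this
    apply squeeze_zero' ?_ ?_ h2
    · filter_upwards [eventually_ge_atTop 1] with k hk
      have hθ := hθpos k hk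
      have hN : (0:ℝ) < (S k).Nreal := by
        have := hN2k k
        have hk1 : (1:ℝ) ≤ (k:ℝ) := by exact_mod_cast hk
        linarith
      positivity
    · filter_upwards [eventually_ge_atTop 1] with k hk
      have h := hle k hk
      have hθ := hθpos k hk
      have hN : (0:ℝ) < (S k).Nreal := by
        have := hN2k k
        have hk1 : (1:ℝ) ≤ (k:ℝ) := by exact_mod_cast hk
        linarith
      have hx : (0:ℝ) < (S k).Nreal * ((S k).pbar * (1 - (S k).pbar)) := mul_pos hN hθ
      have h3 : 1/((S k).Nreal * ((S k).pbar * (1 - (S k).pbar)))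
          = 2 * (1/(2*((S k).Nreal * ((S k).pbar * (1 - (S k).pbar))))) := by
        field_simp
      rw [h3]
      linarith [h]
  -- Step 2 : eventual bound on the probability
  have hg : Tendsto (fun k : ℕ =>
      1/c^2 * (1/((S k).Nreal * ((S k).pbar * (1 - (S k).pbar))))) atTop (nhds 0) := by
    have := htends.const_mul (1/c^2)
    simpa using this
  apply squeeze_zero' (Filter.Eventually.of_forall (fun k => ENNReal.toReal_nonneg)) ?_ hg
  filter_upwards [eventually_ge_atTop 6,
    htends.eventually (gt_mem_nhds hc0)] with k hk6 htk
  haveI : IsProbabilityMeasure (S k).μ := (S k).prob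
  have hk1 : 1 ≤ k := by omega
  have hkk : (S k).k = k := hSk k
  have hpb : (S k).pbar = p k := hpbar k hk1
  have hp0k : 0 < p k := hp k
  have hp1k : p k < 1 := hp1 k
  have hθk : (S k).pbar * (1 - (S k).pbar) = p k * (1 - p k) := by rw [hpb]
  have hθposk : 0 < p k * (1 - p k) := mul_pos hp0k (by linarith)
  have hN12 : (12:ℝ) ≤ (S k).Nreal := by
    have := hN2k k
    have h6 : (6:ℝ) ≤ (k:ℝ) := by exact_mod_cast hk6
    linarith
  have hNpos : (0:ℝ) < (S k).Nreal := by linarith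
  have htkc : 1/((S k).Nreal * (p k * (1 - p k))) ≤ c := by
    rw [← hθk]
    exact le_of_lt htk
  -- the random variable Z
  set Z : (S k).Ω → ℝ := ∑ i ∈ Finset.range (S k).k, (fun ω => (((S k).X i ω : ℕ) : ℝ))
    with hZdef
  have hpiIoo : ∀ i ∈ Finset.range (S k).k, 0 ≤ (S k).pi i ∧ (S k).pi i ≤ 1 := fun i hi =>
    ⟨((S k).hpi i hi).1.le, ((S k).hpi i hi).2.le⟩
  have hmem : ∀ i ∈ Finset.range (S k).k,
      MemLp (fun ω => (((S k).X i ω : ℕ) : ℝ)) 2 (S k).μ := fun i hi =>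
    binom_memL2 ((S k).hmeas i) (hpiIoo i hi).1 (hpiIoo i hi).2 ((S k).hbin i hi)
  have hZmem : MemLp Z 2 (S k).μ := memLp_finset_sum' _ hmem
  have hEZ : (S k).μ[Z] = (S k).Nreal * p k := by
    have h1 : (S k).μ[Z] = ∑ i ∈ Finset.range (S k).k,
        ∫ ω, (((S k).X i ω : ℕ) : ℝ) ∂(S k).μ := by
      rw [hZdef]
      rw [show (∫ ω, (∑ i ∈ Finset.range (S k).k, (fun ω' => (((S k).X i ω' : ℕ) : ℝ))) ω
          ∂(S k).μ) = ∫ ω, (∑ i ∈ Finset.range (S k).k, (((S k).X i ω : ℕ) : ℝ)) ∂(S k).μ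
          from by simp [Finset.sum_apply]]
      exact integral_finset_sum _ (fun i hi => ((hmem i hi).integrable one_le_two))
    rw [h1]
    rw [Finset.sum_congr rfl (fun i hi => binom_mean ((S k).hmeas i)
      (by have := (S k).hn i hi; omega) (hpiIoo i hi).1 (hpiIoo i hi).2 ((S k).hbin i hi))]
    rw [Finset.sum_congr rfl (fun i hi => by rw [hH0 k i hi]), ← Finset.sum_mul]
    rfl
  have hVarZ : variance Z (S k).μ = (S k).Nreal * (p k * (1 - p k)) := by
    have hpair : Set.Pairwise ↑(Finset.range (S k).k)
        (fun i j => IndepFun (fun ω => (((S k).X i ω : ℕ) : ℝ))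
          (fun ω => (((S k).X j ω : ℕ) : ℝ)) (S k).μ) := by
      intro i _ j _ hij
      exact ((S k).hindep.comp (fun _ => (fun m : ℕ => (m:ℝ)))
        (fun _ => measurable_from_top)).indepFun hij
    rw [hZdef, IndepFun.variance_sum hmem hpair]
    rw [Finset.sum_congr rfl (fun i hi => binom_variance ((S k).hmeas i)
      ((S k).hn i hi) (hpiIoo i hi).1 (hpiIoo i hi).2 ((S k).hbin i hi))]
    rw [Finset.sum_congr rfl (fun i hi => by rw [hH0 k i hi]), ← Finset.sum_mul]
    rfl
  have hcc : (0:ℝ) < c * (p k * (1 - p k)) * (S k).Nreal := by positivity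
  have cheb := meas_ge_le_variance_div_sq (μ := (S k).μ) hZmem hcc
  -- set inclusion
  have hincl : {ω | ε ≤ |(S k).V1starHat ω / (S k).V1star - 1|}
      ⊆ {ω | c * (p k * (1 - p k)) * (S k).Nreal ≤ |Z ω - (S k).μ[Z]|} := by
    intro ω hω
    simp only [Set.mem_setOf_eq] at hω ⊢
    by_contra hno
    push_neg at hno
    rw [hEZ] at hno
    have hZω : Z ω = ∑ i ∈ Finset.range (S k).k, (((S k).X i ω : ℕ) : ℝ) := by
      rw [hZdef]; simp [Finset.sum_apply]
    have hphat : (S k).pbarHat ω = Z ω / (S k).Nreal := by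
      rw [(S k).pbarHat_eq ω, hZω]
    have hdist : |(S k).pbarHat ω - p k| ≤ c * (p k * (1 - p k)) := by
      have hid : (S k).pbarHat ω - p k = (Z ω - (S k).Nreal * p k)/(S k).Nreal := by
        rw [hphat]; field_simp
      rw [hid, abs_div, abs_of_pos hNpos, div_le_iff₀ hNpos]
      nlinarith [hno]
    have hA := (S k).sumA1_nonneg (by omega)
    have happ := det_core (N := (S k).Nreal) (p := p k) (c := c)
      (A := ∑ i ∈ Finset.range (S k).k, (S k).A1 i) (ph := (S k).pbarHat ω)
      hN12 hp0k hp1k hc0 hc1 hA htkc hdist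
    have hdec := (S k).decomp (by omega) hN12 ω
    rw [hpb] at hdec
    have hVs : (S k).V1star = (∑ i ∈ Finset.range (S k).k, (S k).A1 i) * (p k * (1 - p k))^2
        + (p k * (1 - p k))/(S k).Nreal := by
      rw [BinSetup.V1star, (S k).sumA2_eq (by omega), hpb]
      ring
    have hVpos : 0 < (S k).V1star := by
      rw [hVs]
      have h1 : 0 < (p k * (1 - p k))/(S k).Nreal := by positivity
      nlinarith [mul_nonneg hA (sq_nonneg (p k * (1 - p k)))]
    have hΔ : |(S k).V1starHat ω - (S k).V1star|
        ≤ 20*c*((∑ i ∈ Finset.range (S k).k, (S k).A1 i) * (p k * (1 - p k))^2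
            + (p k * (1 - p k))/(S k).Nreal) := by
      rw [hdec]
      exact happ
    have hratio : |(S k).V1starHat ω / (S k).V1star - 1| ≤ 20*c := by
      have hid : (S k).V1starHat ω / (S k).V1star - 1
          = ((S k).V1starHat ω - (S k).V1star)/(S k).V1star := by
        field_simp
      rw [hid, abs_div, abs_of_pos hVpos, div_le_iff₀ hVpos]
      calc |(S k).V1starHat ω - (S k).V1star|
          ≤ 20*c*((∑ i ∈ Finset.range (S k).k, (S k).A1 i) * (p k * (1 - p k))^2
              + (p k * (1 - p k))/(S k).Nreal) := hΔ
        _ = 20*c*(S k).V1star := by rw [hVs]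
    linarith
  -- measure arithmetic
  have hbound1 : (S k).μ {ω | ε ≤ |(S k).V1starHat ω / (S k).V1star - 1|}
      ≤ ENNReal.ofReal (variance Z (S k).μ / (c * (p k * (1 - p k)) * (S k).Nreal)^2) :=
    le_trans (measure_mono hincl) cheb
  have hb2 : ((S k).μ {ω | ε ≤ |(S k).V1starHat ω / (S k).V1star - 1|}).toReal
      ≤ variance Z (S k).μ / (c * (p k * (1 - p k)) * (S k).Nreal)^2 := by
    have := ENNReal.toReal_mono (by simp) hbound1
    rwa [ENNReal.toReal_ofReal (div_nonneg (variance_nonneg Z (S k).μ) (sq_nonneg _))] at this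
  calc ((S k).μ {ω | ε ≤ |(S k).V1starHat ω / (S k).V1star - 1|}).toReal
      ≤ variance Z (S k).μ / (c * (p k * (1 - p k)) * (S k).Nreal)^2 := hb2
    _ ≤ 1/c^2 * (1/((S k).Nreal * ((S k).pbar * (1 - (S k).pbar)))) := by
        rw [hVarZ, hθk]
        apply le_of_eq
        field_simp
end
end

section
/- Let X₁,…,X_k be independent with X_i ~ Binomial(n_i, π_i), n_i ≥ 2. Then E[ Σ_{i=1}^k n_i(π̂_i − π̂̄)² ] = Σ_{i=1}^k (1 − n_i/N)·π_i(1−π_i) + Σ_{i=1}^k n_i(π_i − π̄)², so the plug-in statistic overestimates Σ n_i(π_i − π̄)² by Σ (1 − n_i/N)π_i(1−π_i). Consequently, the bias-corrected statistic T = Σ_{i=1}^k n_i(π̂_i − π̂̄)² − Σ_{i=1}^k d_i π̂_i(1−π̂_i), with d_i = (n_i/(n_i−1))(1 − n_i/N), satisfies E[T] = Σ_{i=1}^k n_i(π_i − π̄)²; in particular E[T] ≥ 0 with equality if and only if π₁ = ⋯ = π_k. -/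
noncomputable section

open MeasureTheory ProbabilityTheory Filter

open Finset
lemma binom_sum (n : ℕ) (p : ℝ) :
    ∑ m ∈ range (n+1), (n.choose m : ℝ) * p ^ m * (1-p) ^ (n-m) = 1 := by
  calc ∑ m ∈ range (n+1), (n.choose m : ℝ) * p ^ m * (1-p) ^ (n-m)
      = ∑ m ∈ range (n+1), p ^ m * (1-p) ^ (n-m) * (n.choose m : ℝ) :=
        Finset.sum_congr rfl fun m _ => by ring
    _ = (p + (1-p))^n := (add_pow p (1-p) n).symm
    _ = 1 := by norm_num

lemma binom_sum_mul (n : ℕ) (p : ℝ) :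
    ∑ m ∈ range (n+1), (m:ℝ) * ((n.choose m : ℝ) * p ^ m * (1-p) ^ (n-m)) = n * p := by
  cases n with
  | zero => simp
  | succ s =>
    rw [Finset.sum_range_succ']
    have key : ∀ j : ℕ, ((j:ℝ)+1) * ((s+1).choose (j+1) : ℝ) = ((s:ℝ)+1) * (s.choose j : ℝ) := by
      intro j
      have h := Nat.add_one_mul_choose_eq s j
      have h2 : ((s.succ * s.choose j : ℕ) : ℝ) = (((s+1).choose (j+1) * (j+1) : ℕ) : ℝ) :=
        congrArg Nat.cast h
      push_cast at h2
      linarith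
    have heq : ∀ j ∈ range (s+1),
        (((j+1 : ℕ)):ℝ) * (((s+1).choose (j+1) : ℝ) * p ^ (j+1) * (1-p) ^ (s+1-(j+1)))
        = ((s:ℝ)+1) * p * ((s.choose j : ℝ) * p ^ j * (1-p) ^ (s-j)) := by
      intro j hj
      have hsub : s + 1 - (j+1) = s - j := by omega
      rw [hsub]
      have hk := key j
      push_cast
      linear_combination (p^(j+1) * (1-p)^(s-j)) * hk
    rw [Finset.sum_congr rfl heq, ← Finset.mul_sum, binom_sum]
    push_cast; ring

lemma binom_sum_mul2 (n : ℕ) (p : ℝ) :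
    ∑ m ∈ range (n+1), (m:ℝ) * ((m:ℝ)-1) * ((n.choose m : ℝ) * p ^ m * (1-p) ^ (n-m))
      = n * (n-1) * p^2 := by
  match n with
  | 0 => simp
  | 1 => norm_num [Finset.sum_range_succ]
  | (s+2) =>
    rw [Finset.sum_range_succ', Finset.sum_range_succ']
    have key : ∀ j : ℕ, ((j:ℝ)+2) * ((j:ℝ)+1) * ((s+2).choose (j+2) : ℝ)
        = ((s:ℝ)+2) * ((s:ℝ)+1) * (s.choose j : ℝ) := by
      intro j
      have h1 := Nat.add_one_mul_choose_eq (s+1) (j+1)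
      have h2 := Nat.add_one_mul_choose_eq s j
      have h1' : ((s:ℝ)+2) * ((s+1).choose (j+1) : ℝ) = ((s+2).choose (j+2) : ℝ) * ((j:ℝ)+2) := by
        exact_mod_cast congrArg Nat.cast h1
      have h2' : ((s:ℝ)+1) * ((s.choose j) : ℝ) = ((s+1).choose (j+1) : ℝ) * ((j:ℝ)+1) := by
        exact_mod_cast congrArg Nat.cast h2
      nlinarith [h1', h2']
    have heq : ∀ j ∈ range (s+1),
        (((j+1+1:ℕ)):ℝ) * ((((j+1+1:ℕ)):ℝ)-1) * (((s+2).choose (j+1+1) : ℝ) * p ^ (j+1+1) * (1-p) ^ (s+2-(j+1+1)))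
        = ((s:ℝ)+2) * ((s:ℝ)+1) * p^2 * ((s.choose j : ℝ) * p ^ j * (1-p) ^ (s-j)) := by
      intro j hj
      have hsub : s + 2 - (j+1+1) = s - j := by omega
      rw [hsub]
      have hk := key j
      push_cast
      linear_combination (p^(j+2) * (1-p)^(s-j)) * hk
    rw [Finset.sum_congr rfl heq, ← Finset.mul_sum, binom_sum]
    push_cast; ring

namespace BinSetup

variable (S : BinSetup)

lemma measSet (i m : ℕ) : MeasurableSet {ω | S.X i ω = m} :=
  S.hmeas i (measurableSet_singleton m)

lemma ae_le {i : ℕ} (hi : i ∈ Finset.range S.k) : ∀ᵐ ω ∂S.μ, S.X i ω ≤ S.n i := by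
  have := S.prob
  rw [ae_iff]
  have hsub : {ω | ¬ S.X i ω ≤ S.n i} ⊆ ⋃ m : ℕ, {ω | S.X i ω = S.n i + 1 + m} := by
    intro ω hω
    simp only [Set.mem_setOf_eq, not_le] at hω
    exact Set.mem_iUnion.2 ⟨S.X i ω - (S.n i + 1), by simp only [Set.mem_setOf_eq]; omega⟩
  refine measure_mono_null hsub ?_
  · refine measure_iUnion_null fun m => ?_
    have h := S.hbin i hi (S.n i + 1 + m)
    rw [Nat.choose_eq_zero_of_lt (by omega)] at h
    simp only [Nat.cast_zero, zero_mul] at h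
    have := measure_ne_top S.μ {ω | S.X i ω = S.n i + 1 + m}
    exact (ENNReal.toReal_eq_zero_iff _).1 h |>.resolve_right this

lemma integrable_comp {i : ℕ} (hi : i ∈ Finset.range S.k) (g : ℕ → ℝ) :
    Integrable (fun ω => g (S.X i ω)) S.μ := by
  have := S.prob
  have hrep : (fun ω => g (S.X i ω)) =ᵐ[S.μ]
      fun ω => ∑ m ∈ range (S.n i + 1), Set.indicator {ω' | S.X i ω' = m} (fun _ => g m) ω := by
    filter_upwards [S.ae_le hi] with ω hω
    rw [Finset.sum_eq_single_of_mem (S.X i ω) (Finset.mem_range.2 (by omega))]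
    · simp [Set.indicator_of_mem (by simp : ω ∈ {ω' | S.X i ω' = S.X i ω})]
    · intro m _ hm
      exact Set.indicator_of_notMem (fun h => hm ((Set.mem_setOf_eq ▸ h).symm)) _
  refine (Integrable.congr ?_ hrep.symm)
  exact integrable_finset_sum _ fun m _ =>
    (integrable_const (g m)).indicator (S.measSet i m)

lemma integral_comp {i : ℕ} (hi : i ∈ Finset.range S.k) (g : ℕ → ℝ) :
    ∫ ω, g (S.X i ω) ∂S.μ
      = ∑ m ∈ range (S.n i + 1),
          g m * (((S.n i).choose m : ℝ) * S.pi i ^ m * (1 - S.pi i) ^ (S.n i - m)) := by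
  have := S.prob
  have hrep : (fun ω => g (S.X i ω)) =ᵐ[S.μ]
      fun ω => ∑ m ∈ range (S.n i + 1), Set.indicator {ω' | S.X i ω' = m} (fun _ => g m) ω := by
    filter_upwards [S.ae_le hi] with ω hω
    rw [Finset.sum_eq_single_of_mem (S.X i ω) (Finset.mem_range.2 (by omega))]
    · simp [Set.indicator_of_mem (by simp : ω ∈ {ω' | S.X i ω' = S.X i ω})]
    · intro m _ hm
      exact Set.indicator_of_notMem (fun h => hm ((Set.mem_setOf_eq ▸ h).symm)) _
  rw [integral_congr_ae hrep, integral_finset_sum _ fun m _ =>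
    (integrable_const (g m)).indicator (S.measSet i m)]
  refine Finset.sum_congr rfl fun m _ => ?_
  rw [integral_indicator_const _ (S.measSet i m), smul_eq_mul, mul_comm, measureReal_def, S.hbin i hi m]

end BinSetup

namespace BinSetup
variable (S : BinSetup)


lemma npos {i : ℕ} (hi : i ∈ Finset.range S.k) : (0:ℝ) < (S.n i : ℝ) := by
  have := S.hn i hi; positivity

lemma integral_piHat {i : ℕ} (hi : i ∈ Finset.range S.k) :
    ∫ ω, S.piHat i ω ∂S.μ = S.pi i := by
  have hn := S.npos hi
  have h : ∫ ω, ((S.X i ω : ℝ) / (S.n i : ℝ)) ∂S.μ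
      = ∑ m ∈ range (S.n i + 1),
        ((m:ℝ) / (S.n i : ℝ)) * (((S.n i).choose m : ℝ) * S.pi i ^ m * (1 - S.pi i) ^ (S.n i - m)) :=
    S.integral_comp hi (fun m => (m:ℝ) / (S.n i : ℝ))
  simp only [piHat]
  rw [h]
  have : ∑ m ∈ range (S.n i + 1),
        ((m:ℝ) / (S.n i : ℝ)) * (((S.n i).choose m : ℝ) * S.pi i ^ m * (1 - S.pi i) ^ (S.n i - m))
      = (1 / (S.n i : ℝ)) * ∑ m ∈ range (S.n i + 1),
        (m:ℝ) * (((S.n i).choose m : ℝ) * S.pi i ^ m * (1 - S.pi i) ^ (S.n i - m)) := by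
    rw [Finset.mul_sum]; exact Finset.sum_congr rfl fun m _ => by ring
  rw [this, binom_sum_mul]
  field_simp

lemma integral_sq {i : ℕ} (hi : i ∈ Finset.range S.k) :
    ∫ ω, S.piHat i ω * S.piHat i ω ∂S.μ = S.pi i * S.pi i + S.theta i / (S.n i : ℝ) := by
  have hn := S.npos hi
  have h : ∫ ω, ((S.X i ω : ℝ) / (S.n i : ℝ)) * ((S.X i ω : ℝ) / (S.n i : ℝ)) ∂S.μ
      = ∑ m ∈ range (S.n i + 1),
        ((m:ℝ) / (S.n i : ℝ)) * ((m:ℝ) / (S.n i : ℝ))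
          * (((S.n i).choose m : ℝ) * S.pi i ^ m * (1 - S.pi i) ^ (S.n i - m)) :=
    S.integral_comp hi (fun m => ((m:ℝ) / (S.n i : ℝ)) * ((m:ℝ) / (S.n i : ℝ)))
  simp only [piHat]
  rw [h]
  have : ∑ m ∈ range (S.n i + 1),
        ((m:ℝ) / (S.n i : ℝ)) * ((m:ℝ) / (S.n i : ℝ))
          * (((S.n i).choose m : ℝ) * S.pi i ^ m * (1 - S.pi i) ^ (S.n i - m))
      = (1 / (S.n i : ℝ)^2) * ((∑ m ∈ range (S.n i + 1),
          (m:ℝ) * ((m:ℝ)-1) * (((S.n i).choose m : ℝ) * S.pi i ^ m * (1 - S.pi i) ^ (S.n i - m)))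
        + ∑ m ∈ range (S.n i + 1),
          (m:ℝ) * (((S.n i).choose m : ℝ) * S.pi i ^ m * (1 - S.pi i) ^ (S.n i - m))) := by
    rw [← Finset.sum_add_distrib, Finset.mul_sum]
    exact Finset.sum_congr rfl fun m _ => by ring
  rw [this, binom_sum_mul2, binom_sum_mul, theta]
  field_simp
  ring

lemma integral_piHat_one_sub {i : ℕ} (hi : i ∈ Finset.range S.k) :
    ∫ ω, S.piHat i ω * (1 - S.piHat i ω) ∂S.μ
      = S.theta i * ((S.n i : ℝ) - 1) / (S.n i : ℝ) := by
  have hn := S.npos hi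
  have h : ∫ ω, ((S.X i ω : ℝ) / (S.n i : ℝ)) * (1 - (S.X i ω : ℝ) / (S.n i : ℝ)) ∂S.μ
      = ∑ m ∈ range (S.n i + 1),
        ((m:ℝ) / (S.n i : ℝ)) * (1 - (m:ℝ) / (S.n i : ℝ))
          * (((S.n i).choose m : ℝ) * S.pi i ^ m * (1 - S.pi i) ^ (S.n i - m)) :=
    S.integral_comp hi (fun m => ((m:ℝ) / (S.n i : ℝ)) * (1 - (m:ℝ) / (S.n i : ℝ)))
  simp only [piHat]
  rw [h]
  have : ∑ m ∈ range (S.n i + 1),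
        ((m:ℝ) / (S.n i : ℝ)) * (1 - (m:ℝ) / (S.n i : ℝ))
          * (((S.n i).choose m : ℝ) * S.pi i ^ m * (1 - S.pi i) ^ (S.n i - m))
      = (1 / (S.n i : ℝ)) * (∑ m ∈ range (S.n i + 1),
          (m:ℝ) * (((S.n i).choose m : ℝ) * S.pi i ^ m * (1 - S.pi i) ^ (S.n i - m)))
        - (1 / (S.n i : ℝ)^2) * ((∑ m ∈ range (S.n i + 1),
          (m:ℝ) * ((m:ℝ)-1) * (((S.n i).choose m : ℝ) * S.pi i ^ m * (1 - S.pi i) ^ (S.n i - m)))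
        + ∑ m ∈ range (S.n i + 1),
          (m:ℝ) * (((S.n i).choose m : ℝ) * S.pi i ^ m * (1 - S.pi i) ^ (S.n i - m))) := by
    rw [← Finset.sum_add_distrib, Finset.mul_sum, Finset.mul_sum, ← Finset.sum_sub_distrib]
    exact Finset.sum_congr rfl fun m _ => by ring
  rw [this, binom_sum_mul2, binom_sum_mul, theta]
  field_simp
  ring

lemma integrable_piHat {i : ℕ} (hi : i ∈ Finset.range S.k) :
    Integrable (S.piHat i) S.μ :=
  S.integrable_comp hi (fun m => (m:ℝ) / (S.n i : ℝ))

lemma integrable_piHat_mul_self {i : ℕ} (hi : i ∈ Finset.range S.k) :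
    Integrable (fun ω => S.piHat i ω * S.piHat i ω) S.μ :=
  S.integrable_comp hi (fun m => ((m:ℝ) / (S.n i : ℝ)) * ((m:ℝ) / (S.n i : ℝ)))

lemma integrable_piHat_one_sub {i : ℕ} (hi : i ∈ Finset.range S.k) :
    Integrable (fun ω => S.piHat i ω * (1 - S.piHat i ω)) S.μ :=
  S.integrable_comp hi (fun m => ((m:ℝ) / (S.n i : ℝ)) * (1 - (m:ℝ) / (S.n i : ℝ)))

lemma indep_piHat {i j : ℕ} (hij : i ≠ j) :
    IndepFun (S.piHat i) (S.piHat j) S.μ := by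
  have h := S.hindep.indepFun hij
  exact h.comp (measurable_from_top (f := fun m : ℕ => (m:ℝ) / (S.n i : ℝ)))
    (measurable_from_top (f := fun m : ℕ => (m:ℝ) / (S.n j : ℝ)))

lemma integrable_piHat_mul {i j : ℕ} (hi : i ∈ Finset.range S.k) (hj : j ∈ Finset.range S.k) :
    Integrable (fun ω => S.piHat i ω * S.piHat j ω) S.μ := by
  rcases eq_or_ne i j with rfl | hij
  · exact S.integrable_piHat_mul_self hi
  · exact (S.indep_piHat hij).integrable_mul (S.integrable_piHat hi) (S.integrable_piHat hj)

lemma integral_piHat_mul {i j : ℕ} (hi : i ∈ Finset.range S.k) (hj : j ∈ Finset.range S.k)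
    (hij : i ≠ j) :
    ∫ ω, S.piHat i ω * S.piHat j ω ∂S.μ = S.pi i * S.pi j := by
  have h := (S.indep_piHat hij).integral_mul_eq_mul_integral (S.integrable_piHat hi).aestronglyMeasurable
    (S.integrable_piHat hj).aestronglyMeasurable
  rw [show (fun ω => S.piHat i ω * S.piHat j ω) = S.piHat i * S.piHat j from rfl, h,
    S.integral_piHat hi, S.integral_piHat hj]

end BinSetup

namespace BinSetup
variable (S : BinSetup)

lemma Npos (hk : 1 ≤ S.k) : (0:ℝ) < S.Nreal :=
  Finset.sum_pos (fun i hi => S.npos hi) (Finset.nonempty_range_iff.2 (by omega))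

lemma plug_pointwise (hN : S.Nreal ≠ 0) (ω : S.Ω) :
    ∑ i ∈ Finset.range S.k, (S.n i : ℝ) * (S.piHat i ω - S.pbarHat ω) ^ 2
      = ∑ i ∈ Finset.range S.k, ((S.n i : ℝ) * (S.piHat i ω * S.piHat i ω)
          - (1 / S.Nreal) * ∑ j ∈ Finset.range S.k,
              (S.n i : ℝ) * (S.n j : ℝ) * (S.piHat i ω * S.piHat j ω)) := by
  set Y : ℕ → ℝ := fun i => S.piHat i ω with hY
  set A : ℝ := ∑ i ∈ Finset.range S.k, (S.n i : ℝ) * Y i with hA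
  have hbar : S.pbarHat ω = A / S.Nreal := rfl
  have hsq : ∀ i ∈ Finset.range S.k,
      (S.n i : ℝ) * (Y i - A / S.Nreal) ^ 2
        = (S.n i : ℝ) * (Y i * Y i) - 2 * (A / S.Nreal) * ((S.n i : ℝ) * Y i)
          + (A / S.Nreal) ^ 2 * (S.n i : ℝ) := fun i _ => by ring
  have hRHSinner : ∀ i ∈ Finset.range S.k,
      ∑ j ∈ Finset.range S.k, (S.n i : ℝ) * (S.n j : ℝ) * (Y i * Y j)
        = ((S.n i : ℝ) * Y i) * A := by
    intro i _
    rw [hA, Finset.mul_sum]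
    exact Finset.sum_congr rfl fun j _ => by ring
  calc ∑ i ∈ Finset.range S.k, (S.n i : ℝ) * (Y i - S.pbarHat ω) ^ 2
      = ∑ i ∈ Finset.range S.k, ((S.n i : ℝ) * (Y i * Y i)
          - 2 * (A / S.Nreal) * ((S.n i : ℝ) * Y i)
          + (A / S.Nreal) ^ 2 * (S.n i : ℝ)) := by
        rw [hbar]; exact Finset.sum_congr rfl hsq
    _ = ∑ i ∈ Finset.range S.k, (S.n i : ℝ) * (Y i * Y i)
          - 2 * (A / S.Nreal) * A + (A / S.Nreal) ^ 2 * S.Nreal := by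
        rw [Finset.sum_add_distrib, Finset.sum_sub_distrib, ← Finset.mul_sum, ← hA,
          ← Finset.mul_sum]
        rfl
    _ = ∑ i ∈ Finset.range S.k, (S.n i : ℝ) * (Y i * Y i) - (1 / S.Nreal) * (A * A) := by
        field_simp
        ring
    _ = ∑ i ∈ Finset.range S.k, ((S.n i : ℝ) * (Y i * Y i)
          - (1 / S.Nreal) * ∑ j ∈ Finset.range S.k,
              (S.n i : ℝ) * (S.n j : ℝ) * (Y i * Y j)) := by
        rw [Finset.sum_sub_distrib]
        congr 1
        rw [← Finset.mul_sum]
        congr 1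
        rw [Finset.sum_congr rfl hRHSinner, ← Finset.sum_mul, ← hA]

lemma integrable_term (hk : 1 ≤ S.k) {i : ℕ} (hi : i ∈ Finset.range S.k) :
    Integrable (fun ω => (S.n i : ℝ) * (S.piHat i ω * S.piHat i ω)
      - (1 / S.Nreal) * ∑ j ∈ Finset.range S.k,
          (S.n i : ℝ) * (S.n j : ℝ) * (S.piHat i ω * S.piHat j ω)) S.μ := by
  refine Integrable.sub ((S.integrable_piHat_mul_self hi).const_mul _) ?_
  refine Integrable.const_mul ?_ _
  exact integrable_finset_sum _ fun j hj => (S.integrable_piHat_mul hi hj).const_mul _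

lemma integrable_plug (hk : 1 ≤ S.k) :
    Integrable (fun ω => ∑ i ∈ Finset.range S.k,
      (S.n i : ℝ) * (S.piHat i ω - S.pbarHat ω) ^ 2) S.μ := by
  have hN := (S.Npos hk).ne'
  have : (fun ω => ∑ i ∈ Finset.range S.k, (S.n i : ℝ) * (S.piHat i ω - S.pbarHat ω) ^ 2)
      = fun ω => ∑ i ∈ Finset.range S.k, ((S.n i : ℝ) * (S.piHat i ω * S.piHat i ω)
          - (1 / S.Nreal) * ∑ j ∈ Finset.range S.k,
              (S.n i : ℝ) * (S.n j : ℝ) * (S.piHat i ω * S.piHat j ω)) :=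
    funext (S.plug_pointwise hN)
  rw [this]
  exact integrable_finset_sum _ fun i hi => S.integrable_term hk hi

lemma integral_plug (hk : 1 ≤ S.k) :
    ∫ ω, (∑ i ∈ Finset.range S.k, (S.n i : ℝ) * (S.piHat i ω - S.pbarHat ω) ^ 2) ∂S.μ
      = ∑ i ∈ Finset.range S.k, (1 - (S.n i : ℝ) / S.Nreal) * S.theta i
        + ∑ i ∈ Finset.range S.k, (S.n i : ℝ) * (S.pi i - S.pbar) ^ 2 := by
  have hN0 := S.Npos hk
  have hN := hN0.ne'
  have hrw : (fun ω => ∑ i ∈ Finset.range S.k, (S.n i : ℝ) * (S.piHat i ω - S.pbarHat ω) ^ 2)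
      = fun ω => ∑ i ∈ Finset.range S.k, ((S.n i : ℝ) * (S.piHat i ω * S.piHat i ω)
          - (1 / S.Nreal) * ∑ j ∈ Finset.range S.k,
              (S.n i : ℝ) * (S.n j : ℝ) * (S.piHat i ω * S.piHat j ω)) :=
    funext (S.plug_pointwise hN)
  rw [hrw, integral_finset_sum _ fun i hi => S.integrable_term hk hi]
  have hterm : ∀ i ∈ Finset.range S.k,
      ∫ ω, ((S.n i : ℝ) * (S.piHat i ω * S.piHat i ω)
        - (1 / S.Nreal) * ∑ j ∈ Finset.range S.k,
            (S.n i : ℝ) * (S.n j : ℝ) * (S.piHat i ω * S.piHat j ω)) ∂S.μ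
      = ((S.n i : ℝ) * (S.pi i * S.pi i) + S.theta i)
        - (1 / S.Nreal) * ((S.n i : ℝ) * S.pi i
            * (∑ j ∈ Finset.range S.k, (S.n j : ℝ) * S.pi j) + (S.n i : ℝ) * S.theta i) := by
    intro i hi
    have hni := S.npos hi
    rw [integral_sub ((S.integrable_piHat_mul_self hi).const_mul _)
      (Integrable.const_mul (integrable_finset_sum _
        fun j hj => (S.integrable_piHat_mul hi hj).const_mul _) _),
      integral_const_mul, integral_const_mul,
      integral_finset_sum _ fun j hj => (S.integrable_piHat_mul hi hj).const_mul _,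
      S.integral_sq hi]
    have hinner : ∑ j ∈ Finset.range S.k,
        ∫ ω, (S.n i : ℝ) * (S.n j : ℝ) * (S.piHat i ω * S.piHat j ω) ∂S.μ
        = (S.n i : ℝ) * S.pi i * (∑ j ∈ Finset.range S.k, (S.n j : ℝ) * S.pi j)
          + (S.n i : ℝ) * S.theta i := by
      have hsplit : ∀ j ∈ Finset.range S.k,
          ∫ ω, (S.n i : ℝ) * (S.n j : ℝ) * (S.piHat i ω * S.piHat j ω) ∂S.μ
          = (S.n i : ℝ) * S.pi i * ((S.n j : ℝ) * S.pi j)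
            + (if j = i then (S.n i : ℝ) * S.theta i else 0) := by
        intro j hj
        rw [integral_const_mul]
        rcases eq_or_ne j i with rfl | hji
        · rw [S.integral_sq hj, if_pos rfl]
          field_simp
        · rw [S.integral_piHat_mul hi hj (fun h => hji h.symm), if_neg hji]
          ring
      rw [Finset.sum_congr rfl hsplit, Finset.sum_add_distrib, Finset.sum_ite_eq'
        (Finset.range S.k) i (fun _ => (S.n i : ℝ) * S.theta i), if_pos hi, Finset.mul_sum]
    rw [hinner]
    have hni' : (S.n i : ℝ) ≠ 0 := hni.ne'
    have hx : (S.n i : ℝ) * (S.pi i * S.pi i + S.theta i / (S.n i : ℝ))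
        = (S.n i : ℝ) * (S.pi i * S.pi i) + S.theta i := by field_simp
    rw [hx]
  rw [Finset.sum_congr rfl hterm]
  -- now pure algebra over sums
  have hpbar : S.pbar = (∑ j ∈ Finset.range S.k, (S.n j : ℝ) * S.pi j) / S.Nreal := rfl
  set P : ℝ := ∑ j ∈ Finset.range S.k, (S.n j : ℝ) * S.pi j with hP
  set Q : ℝ := ∑ i ∈ Finset.range S.k, (S.n i : ℝ) * (S.pi i * S.pi i) with hQ
  set Th : ℝ := ∑ i ∈ Finset.range S.k, S.theta i with hTh
  set Tn : ℝ := ∑ i ∈ Finset.range S.k, (S.n i : ℝ) * S.theta i with hTn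
  have hL : ∑ i ∈ Finset.range S.k, (((S.n i : ℝ) * (S.pi i * S.pi i) + S.theta i)
        - (1 / S.Nreal) * ((S.n i : ℝ) * S.pi i * P + (S.n i : ℝ) * S.theta i))
      = Q + Th - (1 / S.Nreal) * (P * P + Tn) := by
    rw [Finset.sum_sub_distrib, Finset.sum_add_distrib, ← Finset.mul_sum,
      Finset.sum_add_distrib, ← Finset.sum_mul]
  have hR1 : ∑ i ∈ Finset.range S.k, (1 - (S.n i : ℝ) / S.Nreal) * S.theta i
      = Th - (1 / S.Nreal) * Tn := by
    rw [hTh, hTn, Finset.mul_sum, ← Finset.sum_sub_distrib]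
    exact Finset.sum_congr rfl fun i _ => by ring
  have hR2 : ∑ i ∈ Finset.range S.k, (S.n i : ℝ) * (S.pi i - S.pbar) ^ 2
      = Q - 2 * S.pbar * P + S.pbar ^ 2 * S.Nreal := by
    have : ∀ i ∈ Finset.range S.k, (S.n i : ℝ) * (S.pi i - S.pbar) ^ 2
        = (S.n i : ℝ) * (S.pi i * S.pi i) - 2 * S.pbar * ((S.n i : ℝ) * S.pi i)
          + S.pbar ^ 2 * (S.n i : ℝ) := fun i _ => by ring
    rw [Finset.sum_congr rfl this, Finset.sum_add_distrib, Finset.sum_sub_distrib,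
      ← Finset.mul_sum, ← Finset.mul_sum]
    rfl
  rw [hL, hR1, hR2, hpbar]
  field_simp
  ring

lemma integrable_corr (hk : 1 ≤ S.k) :
    Integrable (fun ω => ∑ i ∈ Finset.range S.k,
      S.d i * S.piHat i ω * (1 - S.piHat i ω)) S.μ := by
  refine integrable_finset_sum _ fun i hi => ?_
  have : (fun ω => S.d i * S.piHat i ω * (1 - S.piHat i ω))
      = fun ω => S.d i * (S.piHat i ω * (1 - S.piHat i ω)) := funext fun ω => by ring
  rw [this]
  exact (S.integrable_piHat_one_sub hi).const_mul _

lemma integral_corr (hk : 1 ≤ S.k) :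
    ∫ ω, (∑ i ∈ Finset.range S.k, S.d i * S.piHat i ω * (1 - S.piHat i ω)) ∂S.μ
      = ∑ i ∈ Finset.range S.k, (1 - (S.n i : ℝ) / S.Nreal) * S.theta i := by
  have hrw : ∀ i, (fun ω => S.d i * S.piHat i ω * (1 - S.piHat i ω))
      = fun ω => S.d i * (S.piHat i ω * (1 - S.piHat i ω)) := fun i => funext fun ω => by ring
  rw [integral_finset_sum _ fun i hi => by
    rw [hrw i]; exact (S.integrable_piHat_one_sub hi).const_mul _]
  refine Finset.sum_congr rfl fun i hi => ?_
  rw [show (fun ω => S.d i * S.piHat i ω * (1 - S.piHat i ω))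
    = fun ω => S.d i * (S.piHat i ω * (1 - S.piHat i ω)) from hrw i]
  rw [integral_const_mul, S.integral_piHat_one_sub hi, d]
  have hni := S.hn i hi
  have h1 : (S.n i : ℝ) ≠ 0 := by positivity
  have h2 : (S.n i : ℝ) - 1 ≠ 0 := by
    have : (2:ℝ) ≤ (S.n i : ℝ) := by exact_mod_cast hni
    linarith
  field_simp

lemma integral_T (hk : 1 ≤ S.k) :
    ∫ ω, S.T ω ∂S.μ = ∑ i ∈ Finset.range S.k, (S.n i : ℝ) * (S.pi i - S.pbar) ^ 2 := by
  have : (fun ω => S.T ω) = fun ω =>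
      (∑ i ∈ Finset.range S.k, (S.n i : ℝ) * (S.piHat i ω - S.pbarHat ω) ^ 2)
      - ∑ i ∈ Finset.range S.k, S.d i * S.piHat i ω * (1 - S.piHat i ω) := rfl
  rw [this, integral_sub (S.integrable_plug hk) (S.integrable_corr hk),
    S.integral_plug hk, S.integral_corr hk]
  ring

end BinSetup


/-- the plug-in statistic `Σ nᵢ(π̂ᵢ − π̂̄)²` overestimates
`Σ nᵢ(πᵢ − π̄)²` by `Σ (1 − nᵢ/N)πᵢ(1−πᵢ)`; the bias-corrected statistic `T` is
unbiased for `Σ nᵢ(πᵢ − π̄)²`, which is `≥ 0` with equality iff all `πᵢ` are equal. -/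
theorem stmt_9 (S : BinSetup) (hk : 2 ≤ S.k) :
    (∫ ω, (∑ i ∈ Finset.range S.k, (S.n i : ℝ) * (S.piHat i ω - S.pbarHat ω) ^ 2) ∂S.μ)
      = ∑ i ∈ Finset.range S.k, (1 - (S.n i : ℝ) / S.Nreal) * S.theta i
        + ∑ i ∈ Finset.range S.k, (S.n i : ℝ) * (S.pi i - S.pbar) ^ 2 ∧
    (∫ ω, S.T ω ∂S.μ) = ∑ i ∈ Finset.range S.k, (S.n i : ℝ) * (S.pi i - S.pbar) ^ 2 ∧
    0 ≤ (∫ ω, S.T ω ∂S.μ) ∧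
    ((∫ ω, S.T ω ∂S.μ) = 0 ↔
      ∀ i ∈ Finset.range S.k, ∀ j ∈ Finset.range S.k, S.pi i = S.pi j) := by
  have hk1 : 1 ≤ S.k := by omega
  have hN0 := S.Npos hk1
  refine ⟨S.integral_plug hk1, S.integral_T hk1, ?_, ?_⟩
  · rw [S.integral_T hk1]
    exact Finset.sum_nonneg fun i hi => by positivity
  · rw [S.integral_T hk1]
    constructor
    · intro h0 i hi j hj
      have hterms := (Finset.sum_eq_zero_iff_of_nonneg
        (fun i (hi : i ∈ Finset.range S.k) => by positivity)).1 h0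
      have heq : ∀ l ∈ Finset.range S.k, S.pi l = S.pbar := by
        intro l hl
        have hl' := hterms l hl
        have hnl := S.npos hl
        have : (S.pi l - S.pbar) ^ 2 = 0 := by
          rcases mul_eq_zero.1 hl' with h | h
          · exact absurd h hnl.ne'
          · exact h
        have := pow_eq_zero_iff (n := 2) (by norm_num) |>.1 this
        linarith [sub_eq_zero.1 this]
      rw [heq i hi, heq j hj]
    · intro hall
      have hpb : ∀ i ∈ Finset.range S.k, S.pi i = S.pbar := by
        intro i hi
        have hsum : ∑ j ∈ Finset.range S.k, (S.n j : ℝ) * S.pi j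
            = S.pi i * S.Nreal := by
          rw [BinSetup.Nreal, Finset.mul_sum]
          exact Finset.sum_congr rfl fun j hj => by rw [hall j hj i hi]; ring
        rw [BinSetup.pbar, hsum, mul_div_cancel_right₀ _ hN0.ne']
      refine Finset.sum_eq_zero fun i hi => ?_
      rw [hpb i hi]
      ring
end
end

section
/- Let X ~ Binomial(n, π) with n ≥ 1 and π ∈ (0,1), let π̂ = X/n and θ = π(1−π). Then Cov[(π̂ − π)², π̂(1 − π̂)] = ((n−1)/n³)·θ(1 − 6θ) and Cov[π̂ − π, π̂(1 − π̂)] = ((1 − 2π)θ/n)·(1 − 1/n). -/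
noncomputable section

open MeasureTheory ProbabilityTheory Finset

lemma cd1 (m : ℕ) : ((m.descFactorial 1 : ℕ) : ℝ) = m := by
  simp [Nat.descFactorial]

lemma cd2 (m : ℕ) : ((m.descFactorial 2 : ℕ) : ℝ) = m * (m - 1) := by
  rcases m with _ | j
  · norm_num [Nat.descFactorial]
  · simp [Nat.descFactorial]
    ring

lemma cd3 (m : ℕ) : ((m.descFactorial 3 : ℕ) : ℝ) = m * (m - 1) * (m - 2) := by
  rcases m with _ | _ | j
  · norm_num [Nat.descFactorial]
  · norm_num [Nat.descFactorial]
  · simp [Nat.descFactorial]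
    ring

lemma cd4 (m : ℕ) : ((m.descFactorial 4 : ℕ) : ℝ) = m * (m - 1) * (m - 2) * (m - 3) := by
  rcases m with _ | _ | _ | j
  · norm_num [Nat.descFactorial]
  · norm_num [Nat.descFactorial]
  · norm_num [Nat.descFactorial]
  · simp [Nat.descFactorial]
    ring

lemma desc_choose {n k j : ℕ} (hjn : k + j ≤ n) :
    (k + j).descFactorial k * n.choose (k + j) = n.descFactorial k * (n - k).choose j := by
  rw [Nat.descFactorial_eq_factorial_mul_choose, Nat.descFactorial_eq_factorial_mul_choose,
    Nat.mul_assoc, Nat.mul_assoc]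
  congr 1
  rw [Nat.mul_comm, Nat.choose_mul (Nat.le_add_right k j), Nat.add_sub_cancel_left]

lemma falling_sum (p : ℝ) (n k : ℕ) :
    ∑ m ∈ range (n + 1), (m.descFactorial k : ℝ) * (n.choose m : ℝ) * p ^ m * (1 - p) ^ (n - m)
      = (n.descFactorial k : ℝ) * p ^ k := by
  rcases le_or_gt k n with hk | hk
  · rw [range_eq_Ico, ← Finset.sum_Ico_consecutive _ (Nat.zero_le k) (by omega : k ≤ n + 1)]
    have h0 : ∑ m ∈ Ico 0 k,
        (m.descFactorial k : ℝ) * (n.choose m : ℝ) * p ^ m * (1 - p) ^ (n - m) = 0 := by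
      refine Finset.sum_eq_zero fun m hm => ?_
      rw [Nat.descFactorial_eq_zero_iff_lt.2 (mem_Ico.mp hm).2]
      simp
    rw [h0, zero_add, Finset.sum_Ico_eq_sum_range]
    rw [show n + 1 - k = (n - k) + 1 by omega]
    have hterm : ∀ j ∈ range ((n - k) + 1),
        ((k + j).descFactorial k : ℝ) * (n.choose (k + j) : ℝ) * p ^ (k + j) * (1 - p) ^ (n - (k + j))
          = (n.descFactorial k : ℝ) * p ^ k *
            (((n - k).choose j : ℝ) * p ^ j * (1 - p) ^ ((n - k) - j)) := by
      intro j hj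
      have hjn : k + j ≤ n := by have := mem_range.mp hj; omega
      have hidR : ((k + j).descFactorial k : ℝ) * (n.choose (k + j) : ℝ)
          = (n.descFactorial k : ℝ) * ((n - k).choose j : ℝ) := by
        exact_mod_cast desc_choose hjn
      have hsub : n - (k + j) = (n - k) - j := by omega
      calc ((k + j).descFactorial k : ℝ) * (n.choose (k + j) : ℝ) * p ^ (k + j) * (1 - p) ^ (n - (k + j))
          = (((k + j).descFactorial k : ℝ) * (n.choose (k + j) : ℝ)) *
              (p ^ (k + j) * (1 - p) ^ ((n - k) - j)) := by rw [hsub]; ring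
        _ = _ := by rw [hidR, pow_add]; ring
    rw [Finset.sum_congr rfl hterm, ← Finset.mul_sum]
    have hbinom : ∑ j ∈ range ((n - k) + 1),
        ((n - k).choose j : ℝ) * p ^ j * (1 - p) ^ ((n - k) - j) = 1 := by
      have h := add_pow p (1 - p) (n - k)
      rw [show p + (1 - p) = 1 by ring, one_pow] at h
      rw [show ∑ j ∈ range ((n - k) + 1),
            ((n - k).choose j : ℝ) * p ^ j * (1 - p) ^ ((n - k) - j)
          = ∑ j ∈ range ((n - k) + 1), p ^ j * (1 - p) ^ ((n - k) - j) * ((n - k).choose j : ℝ)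
        from Finset.sum_congr rfl fun j _ => by ring]
      exact h.symm
    rw [hbinom, mul_one]
  · have hz : (n.descFactorial k : ℝ) = 0 := by
      rw [Nat.descFactorial_eq_zero_iff_lt.2 hk]; norm_num
    rw [hz, zero_mul]
    refine Finset.sum_eq_zero fun m hm => ?_
    rw [Nat.descFactorial_eq_zero_iff_lt.2 (by have := mem_range.mp hm; omega : m < k)]
    simp

lemma integral_eq_sum {Ω : Type*} [MeasurableSpace Ω] (μ : Measure Ω) [IsProbabilityMeasure μ]
    (n : ℕ) (p : ℝ) (X : Ω → ℕ) (hmeas : Measurable X) (hbin : IsBinomial μ X n p)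
    (f : ℕ → ℝ) :
    ∫ ω, f (X ω) ∂μ = ∑ m ∈ range (n + 1),
      f m * ((n.choose m : ℝ) * p ^ m * (1 - p) ^ (n - m)) := by
  have hA : ∀ m : ℕ, MeasurableSet {ω | X ω = m} := fun m =>
    hmeas (measurableSet_singleton m)
  have hnull : ∀ m : ℕ, n < m → μ {ω | X ω = m} = 0 := by
    intro m hm
    have h := hbin m
    rw [Nat.choose_eq_zero_of_lt hm] at h
    norm_num at h
    rcases (ENNReal.toReal_eq_zero_iff _).mp h with h | h
    · exact h
    · exact absurd h (measure_ne_top μ _)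
  have hae : ∀ᵐ ω ∂μ, X ω ≤ n := by
    rw [ae_iff]
    refine measure_mono_null (fun ω hω => ?_)
      (measure_iUnion_null (fun m : ℕ => hnull (n + 1 + m) (by omega)))
    simp only [Set.mem_setOf_eq, not_le] at hω
    simp only [Set.mem_iUnion, Set.mem_setOf_eq]
    exact ⟨X ω - (n + 1), by omega⟩
  have heq : ∀ᵐ ω ∂μ, f (X ω) = ∑ m ∈ range (n + 1),
      Set.indicator {ω' | X ω' = m} (fun _ => f m) ω := by
    filter_upwards [hae] with ω hω
    symm
    calc ∑ m ∈ range (n + 1), Set.indicator {ω' | X ω' = m} (fun _ => f m) ω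
        = ∑ m ∈ range (n + 1), if X ω = m then f m else 0 := by
          refine Finset.sum_congr rfl fun m _ => ?_
          simp [Set.indicator_apply]
      _ = f (X ω) := by
          rw [Finset.sum_ite_eq]
          exact if_pos (mem_range.mpr (by omega))
  rw [integral_congr_ae heq, integral_finset_sum _
    (fun m _ => (integrable_const (f m)).indicator (hA m))]
  refine Finset.sum_congr rfl fun m _ => ?_
  rw [integral_indicator_const _ (hA m), smul_eq_mul, measureReal_def, hbin m, mul_comm]

/-- `Cov[(π̂−π)², π̂(1−π̂)] = ((n−1)/n³)θ(1−6θ)` and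
`Cov[π̂−π, π̂(1−π̂)] = ((1−2π)θ/n)(1 − 1/n)`, where `Cov(Y,Z) = E[YZ] − E[Y]E[Z]`. -/
theorem stmt_13 {Ω : Type*} [MeasurableSpace Ω] (μ : Measure Ω) [IsProbabilityMeasure μ]
    (n : ℕ) (hn : 1 ≤ n) (p : ℝ) (hp : p ∈ Set.Ioo (0 : ℝ) 1)
    (X : Ω → ℕ) (hmeas : Measurable X) (hbin : IsBinomial μ X n p) :
    (∫ ω, (((X ω : ℝ) / n - p) ^ 2) * (((X ω : ℝ) / n) * (1 - (X ω : ℝ) / n)) ∂μ)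
        - (∫ ω, ((X ω : ℝ) / n - p) ^ 2 ∂μ)
            * (∫ ω, ((X ω : ℝ) / n) * (1 - (X ω : ℝ) / n) ∂μ)
      = (((n : ℝ) - 1) / (n : ℝ) ^ 3) * (p * (1 - p)) * (1 - 6 * (p * (1 - p))) ∧
    (∫ ω, ((X ω : ℝ) / n - p) * (((X ω : ℝ) / n) * (1 - (X ω : ℝ) / n)) ∂μ)
        - (∫ ω, ((X ω : ℝ) / n - p) ∂μ)
            * (∫ ω, ((X ω : ℝ) / n) * (1 - (X ω : ℝ) / n) ∂μ)
      = ((1 - 2 * p) * (p * (1 - p)) / (n : ℝ)) * (1 - 1 / (n : ℝ)) := by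
  have hN : (n : ℝ) ≠ 0 := Nat.cast_ne_zero.mpr (by omega)
  set T : ℕ → ℝ := fun m => (n.choose m : ℝ) * p ^ m * (1 - p) ^ (n - m) with hT
  have eS : ∀ k, ∑ m ∈ range (n + 1), (m.descFactorial k : ℝ) * T m
      = (n.descFactorial k : ℝ) * p ^ k := by
    intro k
    rw [← falling_sum p n k]
    exact Finset.sum_congr rfl fun m _ => by simp only [hT]; ring
  have t0 : ∑ m ∈ range (n + 1), T m = 1 := by
    have h := eS 0
    simpa using h
  have t1 : ∑ m ∈ range (n + 1), (m : ℝ) * T m = (n : ℝ) * p := by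
    have h := eS 1
    simp only [cd1, pow_one] at h
    exact h
  have t2 : ∑ m ∈ range (n + 1), (m : ℝ) ^ 2 * T m
      = (n : ℝ) * ((n : ℝ) - 1) * p ^ 2 + (n : ℝ) * p := by
    have h2 := eS 2
    have h1 := eS 1
    simp only [cd1, cd2, pow_one] at h1 h2
    rw [Finset.sum_congr rfl (fun m (_ : m ∈ range (n + 1)) =>
      show (m : ℝ) ^ 2 * T m = (m : ℝ) * ((m : ℝ) - 1) * T m + (m : ℝ) * T m by ring),
      Finset.sum_add_distrib, h1, h2]
  have t3 : ∑ m ∈ range (n + 1), (m : ℝ) ^ 3 * T m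
      = (n : ℝ) * ((n : ℝ) - 1) * ((n : ℝ) - 2) * p ^ 3
        + 3 * ((n : ℝ) * ((n : ℝ) - 1) * p ^ 2) + (n : ℝ) * p := by
    have h3 := eS 3
    have h2 := eS 2
    have h1 := eS 1
    simp only [cd1, cd2, cd3, pow_one] at h1 h2 h3
    rw [Finset.sum_congr rfl (fun m (_ : m ∈ range (n + 1)) =>
      show (m : ℝ) ^ 3 * T m = ((m : ℝ) * ((m : ℝ) - 1) * ((m : ℝ) - 2) * T m
        + 3 * ((m : ℝ) * ((m : ℝ) - 1) * T m)) + (m : ℝ) * T m by ring),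
      Finset.sum_add_distrib, Finset.sum_add_distrib, ← Finset.mul_sum, h1, h2, h3]
  have t4 : ∑ m ∈ range (n + 1), (m : ℝ) ^ 4 * T m
      = (n : ℝ) * ((n : ℝ) - 1) * ((n : ℝ) - 2) * ((n : ℝ) - 3) * p ^ 4
        + 6 * ((n : ℝ) * ((n : ℝ) - 1) * ((n : ℝ) - 2) * p ^ 3)
        + 7 * ((n : ℝ) * ((n : ℝ) - 1) * p ^ 2) + (n : ℝ) * p := by
    have h4 := eS 4
    have h3 := eS 3
    have h2 := eS 2
    have h1 := eS 1
    simp only [cd1, cd2, cd3, cd4, pow_one] at h1 h2 h3 h4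
    rw [Finset.sum_congr rfl (fun m (_ : m ∈ range (n + 1)) =>
      show (m : ℝ) ^ 4 * T m = (((m : ℝ) * ((m : ℝ) - 1) * ((m : ℝ) - 2) * ((m : ℝ) - 3) * T m
        + 6 * ((m : ℝ) * ((m : ℝ) - 1) * ((m : ℝ) - 2) * T m))
        + 7 * ((m : ℝ) * ((m : ℝ) - 1) * T m)) + (m : ℝ) * T m by ring),
      Finset.sum_add_distrib, Finset.sum_add_distrib, Finset.sum_add_distrib,
      ← Finset.mul_sum, ← Finset.mul_sum, h1, h2, h3, h4]
  have key : ∀ c0 c1 c2 c3 c4 : ℝ,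
      ∑ m ∈ range (n + 1),
        (c0 + c1 * (m : ℝ) + c2 * (m : ℝ) ^ 2 + c3 * (m : ℝ) ^ 3 + c4 * (m : ℝ) ^ 4) * T m
      = c0 + c1 * ((n : ℝ) * p)
        + c2 * ((n : ℝ) * ((n : ℝ) - 1) * p ^ 2 + (n : ℝ) * p)
        + c3 * ((n : ℝ) * ((n : ℝ) - 1) * ((n : ℝ) - 2) * p ^ 3
            + 3 * ((n : ℝ) * ((n : ℝ) - 1) * p ^ 2) + (n : ℝ) * p)
        + c4 * ((n : ℝ) * ((n : ℝ) - 1) * ((n : ℝ) - 2) * ((n : ℝ) - 3) * p ^ 4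
            + 6 * ((n : ℝ) * ((n : ℝ) - 1) * ((n : ℝ) - 2) * p ^ 3)
            + 7 * ((n : ℝ) * ((n : ℝ) - 1) * p ^ 2) + (n : ℝ) * p) := by
    intro c0 c1 c2 c3 c4
    rw [Finset.sum_congr rfl (fun m (_ : m ∈ range (n + 1)) =>
      show (c0 + c1 * (m : ℝ) + c2 * (m : ℝ) ^ 2 + c3 * (m : ℝ) ^ 3 + c4 * (m : ℝ) ^ 4) * T m
        = (((c0 * T m + c1 * ((m : ℝ) * T m)) + c2 * ((m : ℝ) ^ 2 * T m))
            + c3 * ((m : ℝ) ^ 3 * T m)) + c4 * ((m : ℝ) ^ 4 * T m) by ring),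
      Finset.sum_add_distrib, Finset.sum_add_distrib, Finset.sum_add_distrib,
      Finset.sum_add_distrib, ← Finset.mul_sum, ← Finset.mul_sum, ← Finset.mul_sum,
      ← Finset.mul_sum, ← Finset.mul_sum, t0, t1, t2, t3, t4, mul_one]
  have hInt := integral_eq_sum μ n p X hmeas hbin
  have hIA : (∫ ω, (((X ω : ℝ) / n - p) ^ 2) * (((X ω : ℝ) / n) * (1 - (X ω : ℝ) / n)) ∂μ)
      = ∑ m ∈ range (n + 1),
        ((((m : ℝ) / n - p) ^ 2) * (((m : ℝ) / n) * (1 - (m : ℝ) / n))) * T m :=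
    hInt (fun m => (((m : ℝ) / n - p) ^ 2) * (((m : ℝ) / n) * (1 - (m : ℝ) / n)))
  have hIB : (∫ ω, ((X ω : ℝ) / n - p) ^ 2 ∂μ)
      = ∑ m ∈ range (n + 1), (((m : ℝ) / n - p) ^ 2) * T m :=
    hInt (fun m => ((m : ℝ) / n - p) ^ 2)
  have hIC : (∫ ω, ((X ω : ℝ) / n) * (1 - (X ω : ℝ) / n) ∂μ)
      = ∑ m ∈ range (n + 1), (((m : ℝ) / n) * (1 - (m : ℝ) / n)) * T m :=
    hInt (fun m => ((m : ℝ) / n) * (1 - (m : ℝ) / n))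
  have hID : (∫ ω, ((X ω : ℝ) / n - p) * (((X ω : ℝ) / n) * (1 - (X ω : ℝ) / n)) ∂μ)
      = ∑ m ∈ range (n + 1),
        (((m : ℝ) / n - p) * (((m : ℝ) / n) * (1 - (m : ℝ) / n))) * T m :=
    hInt (fun m => ((m : ℝ) / n - p) * (((m : ℝ) / n) * (1 - (m : ℝ) / n)))
  have hIE : (∫ ω, ((X ω : ℝ) / n - p) ∂μ)
      = ∑ m ∈ range (n + 1), ((m : ℝ) / n - p) * T m :=
    hInt (fun m => (m : ℝ) / n - p)
  have sA : ∑ m ∈ range (n + 1),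
      ((((m : ℝ) / n - p) ^ 2) * (((m : ℝ) / n) * (1 - (m : ℝ) / n))) * T m
      = ∑ m ∈ range (n + 1),
        ((0 : ℝ) + (p ^ 2 / (n : ℝ)) * (m : ℝ) + (-(2 * p + p ^ 2) / (n : ℝ) ^ 2) * (m : ℝ) ^ 2
          + ((1 + 2 * p) / (n : ℝ) ^ 3) * (m : ℝ) ^ 3 + (-1 / (n : ℝ) ^ 4) * (m : ℝ) ^ 4) * T m :=
    Finset.sum_congr rfl fun m _ => by ring
  have sB : ∑ m ∈ range (n + 1), (((m : ℝ) / n - p) ^ 2) * T m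
      = ∑ m ∈ range (n + 1),
        ((p ^ 2 : ℝ) + (-(2 * p) / (n : ℝ)) * (m : ℝ) + (1 / (n : ℝ) ^ 2) * (m : ℝ) ^ 2
          + (0 : ℝ) * (m : ℝ) ^ 3 + (0 : ℝ) * (m : ℝ) ^ 4) * T m :=
    Finset.sum_congr rfl fun m _ => by ring
  have sC : ∑ m ∈ range (n + 1), (((m : ℝ) / n) * (1 - (m : ℝ) / n)) * T m
      = ∑ m ∈ range (n + 1),
        ((0 : ℝ) + (1 / (n : ℝ)) * (m : ℝ) + (-1 / (n : ℝ) ^ 2) * (m : ℝ) ^ 2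
          + (0 : ℝ) * (m : ℝ) ^ 3 + (0 : ℝ) * (m : ℝ) ^ 4) * T m :=
    Finset.sum_congr rfl fun m _ => by ring
  have sD : ∑ m ∈ range (n + 1),
      (((m : ℝ) / n - p) * (((m : ℝ) / n) * (1 - (m : ℝ) / n))) * T m
      = ∑ m ∈ range (n + 1),
        ((0 : ℝ) + (-p / (n : ℝ)) * (m : ℝ) + ((1 + p) / (n : ℝ) ^ 2) * (m : ℝ) ^ 2
          + (-1 / (n : ℝ) ^ 3) * (m : ℝ) ^ 3 + (0 : ℝ) * (m : ℝ) ^ 4) * T m :=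
    Finset.sum_congr rfl fun m _ => by ring
  have sE : ∑ m ∈ range (n + 1), ((m : ℝ) / n - p) * T m
      = ∑ m ∈ range (n + 1),
        ((-p : ℝ) + (1 / (n : ℝ)) * (m : ℝ) + (0 : ℝ) * (m : ℝ) ^ 2
          + (0 : ℝ) * (m : ℝ) ^ 3 + (0 : ℝ) * (m : ℝ) ^ 4) * T m :=
    Finset.sum_congr rfl fun m _ => by ring
  rw [hIA, hIB, hIC, hID, hIE, sA, sB, sC, sD, sE, key, key, key, key, key]
  constructor
  · field_simp
    ring
  · field_simp
    ring
end
end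

section
/- For an integer n ≥ 2, let f : ℝ → ℝ be given by f(x) = 2x²(1−x)² + x(1−x)/n. Then f''(x) > 0 for all x with 0 < x < 1/2 − (1/(2√3))·√(1 + 1/n), so f is strictly convex on this interval. Consequently, if π₁,…,π_k all lie in (0, 1/2 − (1/(2√3))·√(1 + 1/n)), then (1/k)·Σ_{i=1}^k f(π_i) ≥ f(π̄) where π̄ = (1/k)·Σ_{i=1}^k π_i; that is, in the balanced case n₁ = ⋯ = n_k = n the quantity Σ_{i=1}^k f(π_i) (of the form of 𝒱₁) is at least k·f(π̄) (of the form of 𝒱_{1*}). -/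
lemma aux_deriv (n : ℕ) (f : ℝ → ℝ)
    (hf : f = fun x => 2 * x ^ 2 * (1 - x) ^ 2 + x * (1 - x) / (n : ℝ)) :
    deriv f = fun x => 4 * x - 12 * x ^ 2 + 8 * x ^ 3 + (1 - 2 * x) / (n : ℝ) := by
  funext x
  have h : HasDerivAt f (4 * x - 12 * x ^ 2 + 8 * x ^ 3 + (1 - 2 * x) / (n : ℝ)) x := by
    rw [hf]
    have hA : HasDerivAt (fun x : ℝ => 2 * x ^ 2 * (1 - x) ^ 2)
        ((2 * (2 * x ^ 1)) * (1 - x) ^ 2 + (2 * x ^ 2) *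
          ((2 : ℕ) * (1 - x) ^ 1 * (0 - 1))) x := by
      exact ((hasDerivAt_pow 2 x).const_mul 2).mul
        (((hasDerivAt_const x (1:ℝ)).sub (hasDerivAt_id x)).pow 2)
    have hB : HasDerivAt (fun x : ℝ => x * (1 - x) / (n : ℝ))
        ((1 * (1 - x) + x * (0 - 1)) / (n : ℝ)) x := by
      exact ((hasDerivAt_id x).mul ((hasDerivAt_const x (1:ℝ)).sub (hasDerivAt_id x))).div_const _
    refine (hA.add hB).congr_deriv ?_
    push_cast
    ring
  exact h.deriv

lemma aux_deriv2 (n : ℕ) (f : ℝ → ℝ)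
    (hf : f = fun x => 2 * x ^ 2 * (1 - x) ^ 2 + x * (1 - x) / (n : ℝ)) :
    deriv (deriv f) = fun x => 4 - 24 * x + 24 * x ^ 2 - 2 / (n : ℝ) := by
  rw [aux_deriv n f hf]
  funext x
  have h : HasDerivAt (fun x : ℝ => 4 * x - 12 * x ^ 2 + 8 * x ^ 3 + (1 - 2 * x) / (n : ℝ))
      (4 - 24 * x + 24 * x ^ 2 - 2 / (n : ℝ)) x := by
    have hA : HasDerivAt (fun x : ℝ => 4 * x) 4 x := by
      simpa using (hasDerivAt_id x).const_mul (4:ℝ)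
    have hB : HasDerivAt (fun x : ℝ => 12 * x ^ 2) (12 * (2 * x ^ 1)) x :=
      (hasDerivAt_pow 2 x).const_mul 12
    have hC : HasDerivAt (fun x : ℝ => 8 * x ^ 3) (8 * (3 * x ^ 2)) x :=
      (hasDerivAt_pow 3 x).const_mul 8
    have hD : HasDerivAt (fun x : ℝ => (1 - 2 * x) / (n : ℝ)) ((0 - 2 * 1) / (n : ℝ)) x := by
      exact (((hasDerivAt_const x (1:ℝ)).sub ((hasDerivAt_id x).const_mul 2))).div_const _
    refine (((hA.sub hB).add hC).add hD).congr_deriv ?_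
    push_cast
    ring
  exact h.deriv

lemma aux_pos (n : ℕ) (hn : 2 ≤ n) (x : ℝ) (hx : 0 < x)
    (hlt : x < 1 / 2 - (1 / (2 * Real.sqrt 3)) * Real.sqrt (1 + 1 / (n : ℝ))) :
    0 < 4 - 24 * x + 24 * x ^ 2 - 2 / (n : ℝ) := by
  have hn0 : (0:ℝ) < n := by positivity
  have hs : Real.sqrt 3 > 0 := Real.sqrt_pos.mpr (by norm_num)
  have ht : Real.sqrt (1 + 1 / (n : ℝ)) > 0 := Real.sqrt_pos.mpr (by positivity)
  have hs2 : Real.sqrt 3 ^ 2 = 3 := Real.sq_sqrt (by norm_num)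
  have ht2 : Real.sqrt (1 + 1 / (n : ℝ)) ^ 2 = 1 + 1 / (n : ℝ) :=
    Real.sq_sqrt (by positivity)
  have hcpos : 0 < (1 / (2 * Real.sqrt 3)) * Real.sqrt (1 + 1 / (n : ℝ)) := by positivity
  have hlt' : (1 / (2 * Real.sqrt 3)) * Real.sqrt (1 + 1 / (n : ℝ)) < 1 / 2 - x := by linarith
  have hsq := mul_self_lt_mul_self hcpos.le hlt'
  have h3 : Real.sqrt 3 * Real.sqrt 3 = 3 := by nlinarith [hs2]
  have h4 : Real.sqrt (1 + 1 / (n : ℝ)) * Real.sqrt (1 + 1 / (n : ℝ)) = 1 + 1 / (n : ℝ) := by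
    nlinarith [ht2]
  have hc2 : ((1 / (2 * Real.sqrt 3)) * Real.sqrt (1 + 1 / (n : ℝ))) *
      ((1 / (2 * Real.sqrt 3)) * Real.sqrt (1 + 1 / (n : ℝ))) = (1 + 1 / (n : ℝ)) / 12 := by
    have hrw : ((1 / (2 * Real.sqrt 3)) * Real.sqrt (1 + 1 / (n : ℝ))) *
        ((1 / (2 * Real.sqrt 3)) * Real.sqrt (1 + 1 / (n : ℝ)))
        = (Real.sqrt (1 + 1 / (n : ℝ)) * Real.sqrt (1 + 1 / (n : ℝ))) /
          (4 * (Real.sqrt 3 * Real.sqrt 3)) := by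
      ring
    rw [hrw, h3, h4]
    norm_num
  rw [hc2] at hsq
  have hne : (n : ℝ) ≠ 0 := ne_of_gt hn0
  have h := mul_lt_mul_of_pos_left hsq hn0
  have h' : (n : ℝ) * ((1 + 1 / (n : ℝ)) / 12) = ((n : ℝ) + 1) / 12 := by field_simp
  have h2 : 2 / (n : ℝ) * (n : ℝ) = 2 := by field_simp
  rw [h'] at h
  nlinarith [h, hn0, h2]

/-- `f(x) = 2x²(1−x)² + x(1−x)/n` has `f''(x) > 0` on
`(0, 1/2 − (1/(2√3))√(1+1/n))`, is strictly convex there, and consequently by Jensen's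
inequality, if all `πᵢ` lie in that interval then `f(π̄) ≤ (1/k)Σ f(πᵢ)`, i.e. in the
balanced case `𝒱_{1*} (= k·f(π̄)) ≤ 𝒱₁ (= Σ f(πᵢ))`. -/
theorem stmt_19 (n : ℕ) (hn : 2 ≤ n) (f : ℝ → ℝ)
    (hf : f = fun x => 2 * x ^ 2 * (1 - x) ^ 2 + x * (1 - x) / (n : ℝ)) :
    (∀ x : ℝ, 0 < x →
      x < 1 / 2 - (1 / (2 * Real.sqrt 3)) * Real.sqrt (1 + 1 / (n : ℝ)) →
      0 < deriv (deriv f) x) ∧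
    StrictConvexOn ℝ
      (Set.Ioo 0 (1 / 2 - (1 / (2 * Real.sqrt 3)) * Real.sqrt (1 + 1 / (n : ℝ)))) f ∧
    (∀ (k : ℕ) (π : ℕ → ℝ), 1 ≤ k →
      (∀ i ∈ Finset.range k,
        π i ∈ Set.Ioo (0 : ℝ) (1 / 2 - (1 / (2 * Real.sqrt 3)) * Real.sqrt (1 + 1 / (n : ℝ)))) →
      f ((1 / (k : ℝ)) * ∑ i ∈ Finset.range k, π i)
        ≤ (1 / (k : ℝ)) * ∑ i ∈ Finset.range k, f (π i) ∧
      (k : ℝ) * f ((1 / (k : ℝ)) * ∑ i ∈ Finset.range k, π i)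
        ≤ ∑ i ∈ Finset.range k, f (π i)) := by
  have hd2 := aux_deriv2 n f hf
  have h1 : ∀ x : ℝ, 0 < x →
      x < 1 / 2 - (1 / (2 * Real.sqrt 3)) * Real.sqrt (1 + 1 / (n : ℝ)) →
      0 < deriv (deriv f) x := by
    intro x hx hlt
    rw [hd2]
    exact aux_pos n hn x hx hlt
  have hconv : StrictConvexOn ℝ
      (Set.Ioo 0 (1 / 2 - (1 / (2 * Real.sqrt 3)) * Real.sqrt (1 + 1 / (n : ℝ)))) f := by
    apply strictConvexOn_of_deriv2_pos (convex_Ioo _ _)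
    · rw [hf]; fun_prop
    · intro x hx
      rw [interior_Ioo] at hx
      simpa [Function.iterate_succ, Function.comp] using h1 x hx.1 hx.2
  refine ⟨h1, hconv, ?_⟩
  intro k π hk hmem
  have hk0 : (0:ℝ) < k := by exact_mod_cast hk
  have hjensen := hconv.convexOn.map_sum_le (t := Finset.range k)
    (w := fun _ => 1 / (k : ℝ)) (p := π)
    (fun i _ => by positivity)
    (by simp [Finset.sum_const, mul_comm]; field_simp)
    (fun i hi => hmem i hi)
  simp only [smul_eq_mul] at hjensen
  rw [← Finset.mul_sum, ← Finset.mul_sum] at hjensen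
  refine ⟨hjensen, ?_⟩
  have := mul_le_mul_of_nonneg_left hjensen (le_of_lt hk0)
  calc (k : ℝ) * f ((1 / (k : ℝ)) * ∑ i ∈ Finset.range k, π i)
      ≤ (k : ℝ) * ((1 / (k : ℝ)) * ∑ i ∈ Finset.range k, f (π i)) := this
    _ = ∑ i ∈ Finset.range k, f (π i) := by field_simp
end
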